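/- arXiv:1707.08086 — 8 statements merged into one kernel-verified Lean document; each statement's English description precedes it below -/
import Mathlib

section
/- The function t ↦ Q(t)^{1/t²} is strictly increasing on (0,∞); equivalently, for all reals 0 < s < t one has (log Q(s))/s² < (log Q(t))/t². -/
open MeasureTheory ProbabilityTheory Real

/-- Standard Gaussian upper tail probability. -/
noncomputable def Q (t : ℝ) : ℝ := ((gaussianReal 0 1) (Set.Ioi t)).toReal

namespace QAux

open Set Filter

/-- The standard Gaussian density. -/
noncomputable def phi (x : ℝ) : ℝ := (Real.sqrt (2 * π))⁻¹ * rexp (-x ^ 2 / 2)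

lemma phi_eq : gaussianPDFReal 0 1 = phi := by
  funext x
  simp [gaussianPDFReal, phi]

lemma phi_pos (x : ℝ) : 0 < phi x := by
  have h : 0 < Real.sqrt (2 * π) := Real.sqrt_pos.mpr (by positivity)
  exact mul_pos (inv_pos.mpr h) (Real.exp_pos _)

lemma phi_cont : Continuous phi := by
  unfold phi
  fun_prop

lemma phi_integrable : Integrable phi := by
  rw [← phi_eq]; exact integrable_gaussianPDFReal 0 1

lemma hasDerivAt_phi (x : ℝ) : HasDerivAt phi (-x * phi x) x := by
  have h1 : HasDerivAt (fun y : ℝ => -y ^ 2 / 2) (-x) x := by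
    have := ((hasDerivAt_pow 2 x).neg).div_const 2
    simpa using this.congr_deriv (by push_cast; ring)
  have h2 := (h1.exp).const_mul (Real.sqrt (2 * π))⁻¹
  unfold phi
  exact h2.congr_deriv (by ring)

lemma Q_eq (t : ℝ) : Q t = ∫ x in Ioi t, phi x := by
  rw [Q, gaussianReal_apply_eq_integral 0 (by norm_num) (Set.Ioi t), phi_eq,
    ENNReal.toReal_ofReal]
  exact setIntegral_nonneg measurableSet_Ioi fun x _ => (phi_pos x).le

lemma Q_pos (t : ℝ) : 0 < Q t := by
  rw [Q_eq]
  rw [setIntegral_pos_iff_support_of_nonneg_ae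
    (Filter.Eventually.of_forall fun x => (phi_pos x).le) phi_integrable.integrableOn]
  have : Function.support phi = univ := by
    ext x; simp [Function.support, (phi_pos x).ne']
  rw [this, univ_inter]
  simp [Real.volume_Ioi]

lemma intervalInt (t : ℝ) : ∫ x in (0:ℝ)..t, phi x = Q 0 - Q t := by
  rcases le_or_gt 0 t with h | h
  · rw [intervalIntegral.integral_of_le h, Q_eq, Q_eq]
    have hu : Ioi (0:ℝ) = Ioc 0 t ∪ Ioi t := (Set.Ioc_union_Ioi_eq_Ioi h).symm
    rw [hu, setIntegral_union (Set.Ioc_disjoint_Ioi le_rfl) measurableSet_Ioi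
      phi_integrable.integrableOn phi_integrable.integrableOn]
    ring
  · rw [intervalIntegral.integral_of_ge h.le, Q_eq, Q_eq]
    have hu : Ioi t = Ioc t 0 ∪ Ioi 0 := (Set.Ioc_union_Ioi_eq_Ioi h.le).symm
    rw [hu, setIntegral_union (Set.Ioc_disjoint_Ioi le_rfl) measurableSet_Ioi
      phi_integrable.integrableOn phi_integrable.integrableOn]
    ring

lemma hasDerivAt_Q (t : ℝ) : HasDerivAt Q (-phi t) t := by
  have h1 : HasDerivAt (fun u => ∫ x in (0:ℝ)..u, phi x) (phi t) t :=
    intervalIntegral.integral_hasDerivAt_right phi_integrable.intervalIntegrable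
      phi_cont.stronglyMeasurable.stronglyMeasurableAtFilter phi_cont.continuousAt
  have h2 := (hasDerivAt_const t (Q 0)).sub h1
  have heq : Q = fun u => Q 0 - ∫ x in (0:ℝ)..u, phi x := by
    funext u; rw [intervalInt u]; ring
  rw [heq]
  simpa [Pi.sub_def] using h2

lemma Q_cont : Continuous Q :=
  continuous_iff_continuousAt.mpr fun t => (hasDerivAt_Q t).continuousAt

lemma Q_tendsto : Tendsto Q atTop (nhds 0) := by
  set c : ℝ := (Real.sqrt (2 * π))⁻¹ with hc
  have hcpos : 0 < c := inv_pos.mpr (Real.sqrt_pos.mpr (by positivity))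
  apply squeeze_zero' (Filter.Eventually.of_forall fun t => (Q_pos t).le)
    (g := fun t => c * rexp (-t))
  · filter_upwards [Filter.eventually_ge_atTop (2:ℝ)] with t ht
    rw [Q_eq]
    have hint : IntegrableOn (fun x => c * rexp (-x)) (Ioi t) := by
      have := (exp_neg_integrableOn_Ioi t (b := 1) one_pos).const_mul c
      simpa [IntegrableOn] using this
    calc ∫ x in Ioi t, phi x ≤ ∫ x in Ioi t, c * rexp (-x) := by
          apply setIntegral_mono_on phi_integrable.integrableOn hint measurableSet_Ioi
          intro x hx
          have hx2 : (2:ℝ) ≤ x := le_of_lt (lt_of_le_of_lt ht hx)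
          have : -x ^ 2 / 2 ≤ -x := by nlinarith
          exact mul_le_mul_of_nonneg_left (Real.exp_le_exp.mpr this) hcpos.le
      _ = c * rexp (-t) := by
          rw [integral_const_mul, integral_exp_neg_Ioi]
  · have : Tendsto (fun t : ℝ => rexp (-t)) atTop (nhds 0) :=
      Real.tendsto_exp_atBot.comp tendsto_neg_atTop_atBot
    simpa using this.const_mul c

/-- generic positivity from strict antitonicity + limit 0 -/
lemma pos_of_anti {f : ℝ → ℝ} {a : ℝ} (h1 : StrictAntiOn f (Ici a))
    (h2 : Tendsto f atTop (nhds 0)) : 0 < f a := by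
  have key : 0 ≤ f (a + 1) := by
    apply le_of_tendsto h2
    filter_upwards [Filter.eventually_ge_atTop (a + 1)] with s hs
    rcases eq_or_lt_of_le hs with h | h
    · exact le_of_eq (congrArg f h.symm)
    · exact (h1 (by simp : a + 1 ∈ Ici a) (le_trans (by linarith) hs) h).le
  have : f (a + 1) < f a := h1 self_mem_Ici (by simp) (by linarith)
  linarith

lemma Q_lt_phi_div (t : ℝ) (ht : 0 < t) : Q t < phi t / t := by
  set U : ℝ → ℝ := fun x => phi x / x - Q x with hU
  have hd : ∀ x ∈ Ioi t, HasDerivAt U (-phi x / x ^ 2) x := by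
    intro x hx
    have hx0 : x ≠ 0 := by have := ht.trans hx; positivity
    have h1 := ((hasDerivAt_phi x).div (hasDerivAt_id x) hx0).sub (hasDerivAt_Q x)
    refine h1.congr_deriv ?_
    simp only [id]
    field_simp
    ring
  -- also need derivative on all of interior (Ici t) = Ioi t, fine
  have hanti : StrictAntiOn U (Ici t) := by
    apply strictAntiOn_of_deriv_neg (convex_Ici t)
    · intro x hx
      rcases eq_or_lt_of_le (mem_Ici.mp hx) with h | h
      · exact ((phi_cont.continuousAt.div continuousAt_id (by rw [← h]; exact ht.ne')).sub
          Q_cont.continuousAt).continuousWithinAt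
      · exact (hd x h).continuousAt.continuousWithinAt
    · intro x hx
      rw [interior_Ici] at hx
      rw [(hd x hx).deriv]
      have hxpos : 0 < x := ht.trans hx
      have h := phi_pos x
      have h2 : 0 < phi x / x ^ 2 := by positivity
      rw [neg_div]
      linarith
  have hlim : Tendsto U atTop (nhds 0) := by
    have h1 : Tendsto (fun x : ℝ => phi x / x) atTop (nhds 0) := by
      set c : ℝ := (Real.sqrt (2 * π))⁻¹ with hc
      have hcpos : 0 < c := inv_pos.mpr (Real.sqrt_pos.mpr (by positivity))
      apply squeeze_zero' (f := fun x : ℝ => phi x / x) (g := fun x => c * rexp (-x))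
      · filter_upwards [Filter.eventually_ge_atTop (1:ℝ)] with x hx
        have := (phi_pos x).le
        positivity
      · filter_upwards [Filter.eventually_ge_atTop (2:ℝ)] with x hx
        have h2 : phi x ≤ c * rexp (-x) := by
          apply mul_le_mul_of_nonneg_left _ hcpos.le
          apply Real.exp_le_exp.mpr
          nlinarith
        calc phi x / x ≤ phi x := by
              rw [div_le_iff₀ (by linarith)]
              nlinarith [(phi_pos x).le]
          _ ≤ c * rexp (-x) := h2
      · have : Tendsto (fun t : ℝ => rexp (-t)) atTop (nhds 0) :=
          Real.tendsto_exp_atBot.comp tendsto_neg_atTop_atBot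
        simpa using this.const_mul c
    simpa using h1.sub Q_tendsto
  have := pos_of_anti hanti hlim
  simpa [hU, sub_pos] using this

lemma lower_bound (t : ℝ) (ht : 0 ≤ t) : t * phi t / (t ^ 2 + 1) < Q t := by
  set L : ℝ → ℝ := fun x => Q x - x * phi x / (x ^ 2 + 1) with hL
  have hd : ∀ x : ℝ, HasDerivAt L
      (-phi x - ((phi x + x * (-x * phi x)) * (x ^ 2 + 1) - x * phi x * (2 * x)) /
        (x ^ 2 + 1) ^ 2) x := by
    intro x
    have hne : (x : ℝ) ^ 2 + 1 ≠ 0 := by positivity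
    have h1 : HasDerivAt (fun y : ℝ => y * phi y) (phi x + x * (-x * phi x)) x := by
      simpa [Pi.mul_def] using (hasDerivAt_id x).mul (hasDerivAt_phi x)
    have h2 : HasDerivAt (fun y : ℝ => y ^ 2 + 1) (2 * x) x := by
      simpa using (hasDerivAt_pow 2 x).add_const 1
    exact (hasDerivAt_Q x).sub (h1.div h2 hne)
  have hanti : StrictAntiOn L (Ici t) := by
    apply strictAntiOn_of_deriv_neg (convex_Ici t)
    · exact fun x _ => (hd x).continuousAt.continuousWithinAt
    · intro x hx
      rw [(hd x).deriv]
      have hp := phi_pos x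
      have hne : (0:ℝ) < (x ^ 2 + 1) ^ 2 := by positivity
      rw [sub_neg, lt_div_iff₀ hne]  -- might not be right form; fallback below
      nlinarith [sq_nonneg x, sq_nonneg (x^2)]
  have hlim : Tendsto L atTop (nhds 0) := by
    have h1 : Tendsto (fun x : ℝ => x * phi x / (x ^ 2 + 1)) atTop (nhds 0) := by
      set c : ℝ := (Real.sqrt (2 * π))⁻¹ with hc
      have hcpos : 0 < c := inv_pos.mpr (Real.sqrt_pos.mpr (by positivity))
      apply squeeze_zero' (g := fun x => c * rexp (-x))
      · filter_upwards [Filter.eventually_ge_atTop (0:ℝ)] with x hx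
        have := (phi_pos x).le
        positivity
      · filter_upwards [Filter.eventually_ge_atTop (2:ℝ)] with x hx
        have h2 : phi x ≤ c * rexp (-x) := by
          apply mul_le_mul_of_nonneg_left _ hcpos.le
          apply Real.exp_le_exp.mpr
          nlinarith
        have hb : x * phi x / (x ^ 2 + 1) ≤ phi x := by
          rw [div_le_iff₀ (by positivity)]
          nlinarith [(phi_pos x).le, sq_nonneg (x - 1)]
        linarith
      · have : Tendsto (fun t : ℝ => rexp (-t)) atTop (nhds 0) :=
          Real.tendsto_exp_atBot.comp tendsto_neg_atTop_atBot
        simpa using this.const_mul c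
    simpa using Q_tendsto.sub h1
  have := pos_of_anti hanti hlim
  simpa [hL, sub_pos] using this

lemma Q_zero : Q 0 = 1 / 2 := by
  have htot : ∫ x, phi x = 1 := by
    rw [← phi_eq]
    exact integral_gaussianPDFReal_eq_one 0 (by norm_num)
  have hsplit : (∫ x in Iic (0:ℝ), phi x) + ∫ x in Ioi (0:ℝ), phi x = 1 := by
    rw [intervalIntegral.integral_Iic_add_Ioi phi_integrable.integrableOn phi_integrable.integrableOn, htot]
  have hsym : ∫ x in Iic (0:ℝ), phi x = ∫ x in Ioi (0:ℝ), phi x := by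
    rw [show Iic (0:ℝ) = Iic (-0) by norm_num, ← integral_comp_neg_Ioi]
    congr 1
    funext x
    simp [phi, neg_sq]
  rw [Q_eq]
  linarith

lemma Q_lt_half_exp (t : ℝ) (ht : 0 < t) : Q t < 1 / 2 * rexp (-t ^ 2 / 2) := by
  set w : ℝ → ℝ := fun x => Q x * rexp (x ^ 2 / 2) with hw
  have hd : ∀ x : ℝ, HasDerivAt w
      (-phi x * rexp (x ^ 2 / 2) + Q x * (rexp (x ^ 2 / 2) * x)) x := by
    intro x
    have h1 : HasDerivAt (fun y : ℝ => y ^ 2 / 2) x x := by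
      simpa using (hasDerivAt_pow 2 x).div_const 2
    exact (hasDerivAt_Q x).mul h1.exp
  have hanti : StrictAntiOn w (Ici (0:ℝ)) := by
    apply strictAntiOn_of_deriv_neg (convex_Ici 0)
    · exact fun x _ => (hd x).continuousAt.continuousWithinAt
    · intro x hx
      rw [interior_Ici] at hx
      rw [(hd x).deriv]
      have h1 : Q x < phi x / x := Q_lt_phi_div x hx
      have h2 : Q x * x < phi x := (lt_div_iff₀ hx).mp h1
      have he : 0 < rexp (x ^ 2 / 2) := Real.exp_pos _
      nlinarith
  have hlt : w t < w 0 := hanti self_mem_Ici (le_of_lt ht) ht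
  have hw0 : w 0 = 1 / 2 := by simp [hw, Q_zero]
  rw [hw0] at hlt
  have he : 0 < rexp (t ^ 2 / 2) := Real.exp_pos _
  have hrw : rexp (-t ^ 2 / 2) * rexp (t ^ 2 / 2) = 1 := by
    rw [← Real.exp_add, show -t ^ 2 / 2 + t ^ 2 / 2 = 0 by ring, Real.exp_zero]
  have hwt : w t = Q t * rexp (t ^ 2 / 2) := rfl
  rw [hwt] at hlt
  nlinarith [hlt, hrw, he]

lemma hasDerivAt_f (t : ℝ) (ht : 0 < t) :
    HasDerivAt (fun u => Real.log (Q u) / u ^ 2)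
      ((-phi t / Q t * t ^ 2 - Real.log (Q t) * (2 * t)) / (t ^ 2) ^ 2) t := by
  have h1 : HasDerivAt (fun u => Real.log (Q u)) (-phi t / Q t) t :=
    (hasDerivAt_Q t).log (Q_pos t).ne'
  have h2 : HasDerivAt (fun u : ℝ => u ^ 2) (2 * t) t := by
    simpa using hasDerivAt_pow 2 t
  exact h1.div h2 (by positivity)

lemma deriv_f_pos (t : ℝ) (ht : 0 < t) :
    0 < (-phi t / Q t * t ^ 2 - Real.log (Q t) * (2 * t)) / (t ^ 2) ^ 2 := by
  apply div_pos _ (by positivity)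
  have hQ := Q_pos t
  have hp := phi_pos t
  have hlow : t * phi t / (t ^ 2 + 1) < Q t := lower_bound t ht.le
  have hlow' : t * phi t < Q t * (t ^ 2 + 1) := by
    rw [div_lt_iff₀ (by positivity)] at hlow
    linarith
  have hup : Q t < 1 / 2 * rexp (-t ^ 2 / 2) := Q_lt_half_exp t ht
  have hlog : Real.log (Q t) < -Real.log 2 - t ^ 2 / 2 := by
    calc Real.log (Q t) < Real.log (1 / 2 * rexp (-t ^ 2 / 2)) := Real.log_lt_log hQ hup
      _ = -Real.log 2 - t ^ 2 / 2 := by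
          rw [Real.log_mul (by norm_num) (Real.exp_pos _).ne', Real.log_exp]
          rw [show (1:ℝ)/2 = 2⁻¹ by norm_num, Real.log_inv]
          ring
  have hlog2 : (0.6931471803 : ℝ) < Real.log 2 := Real.log_two_gt_d9
  have hratio : phi t / Q t * t ^ 2 < t * (t ^ 2 + 1) := by
    rw [div_mul_eq_mul_div, div_lt_iff₀ hQ]
    nlinarith
  have h5 : -(Real.log (Q t) * (2 * t)) > 2 * t * Real.log 2 + t ^ 3 := by
    have h6 := mul_lt_mul_of_pos_right hlog (show (0:ℝ) < 2 * t by linarith)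
    nlinarith [h6]
  have hkey : 0 < t * (2 * Real.log 2 - 1) := mul_pos ht (by linarith)
  have hneg : -phi t / Q t * t ^ 2 = -(phi t / Q t * t ^ 2) := by ring
  rw [hneg]
  nlinarith [h5, hratio, hkey]

end QAux

theorem Q_rpow_one_div_sq_strictMono :
    StrictMonoOn (fun t : ℝ => Q t ^ (1 / t ^ 2)) (Set.Ioi 0) ∧
    ∀ s t : ℝ, 0 < s → s < t → Real.log (Q s) / s ^ 2 < Real.log (Q t) / t ^ 2 := by
  have main : StrictMonoOn (fun u => Real.log (Q u) / u ^ 2) (Set.Ioi 0) := by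
    apply strictMonoOn_of_deriv_pos (convex_Ioi 0)
    · exact fun x hx => (QAux.hasDerivAt_f x hx).continuousAt.continuousWithinAt
    · intro x hx
      rw [interior_Ioi] at hx
      rw [(QAux.hasDerivAt_f x hx).deriv]
      exact QAux.deriv_f_pos x hx
  constructor
  · intro s hs t ht hst
    have hs' : (0:ℝ) < s := hs
    have ht' : (0:ℝ) < t := ht
    have h1 : Q s ^ (1 / s ^ 2) = rexp (Real.log (Q s) / s ^ 2) := by
      rw [Real.rpow_def_of_pos (QAux.Q_pos s)]
      ring_nf
    have h2 : Q t ^ (1 / t ^ 2) = rexp (Real.log (Q t) / t ^ 2) := by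
      rw [Real.rpow_def_of_pos (QAux.Q_pos t)]
      ring_nf
    simp only []
    rw [h1, h2]
    exact Real.exp_lt_exp.mpr (main hs ht hst)
  · exact fun s t hs hst => main (Set.mem_Ioi.mpr hs) (Set.mem_Ioi.mpr (hs.trans hst)) hst
end

section
/- Let ρ ∈ [0,1], t ≥ 0 and δ ≥ 0, and set φ = ρ + δ·√(1−ρ²). Let X and Z be independent standard Gaussian random variables and Y = ρ·X + √(1−ρ²)·Z. Then the bivariate orthant probability satisfies P(X > t and Y > φ·t) ≥ Q(t)·Q(δ·t). -/
open MeasureTheory ProbabilityTheory Real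

theorem bivariate_orthant_lower_bound
    {Ω : Type*} [MeasurableSpace Ω] (P : Measure Ω) [IsProbabilityMeasure P]
    (X Z : Ω → ℝ)
    (hXlaw : P.map X = gaussianReal 0 1) (hZlaw : P.map Z = gaussianReal 0 1)
    (hindep : IndepFun X Z P)
    (ρ t δ : ℝ) (hρ0 : 0 ≤ ρ) (hρ1 : ρ ≤ 1) (ht : 0 ≤ t) (hδ : 0 ≤ δ)
    (Y : Ω → ℝ) (hY : ∀ ω, Y ω = ρ * X ω + Real.sqrt (1 - ρ ^ 2) * Z ω) :
    Q t * Q (δ * t) ≤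
      (P {ω | t < X ω ∧ (ρ + δ * Real.sqrt (1 - ρ ^ 2)) * t < Y ω}).toReal := by
  have hXm : AEMeasurable X P := by
    by_contra h
    rw [Measure.map_of_not_aemeasurable h] at hXlaw
    have := congrArg (fun μ : Measure ℝ => μ Set.univ) hXlaw
    simp at this
  have hZm : AEMeasurable Z P := by
    by_contra h
    rw [Measure.map_of_not_aemeasurable h] at hZlaw
    have := congrArg (fun μ : Measure ℝ => μ Set.univ) hZlaw
    simp at this
  set s : ℝ := Real.sqrt (1 - ρ ^ 2) with hs
  have hs0 : 0 ≤ s := Real.sqrt_nonneg _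
  -- key inclusion
  have hsub : X ⁻¹' (Set.Ioi t) ∩ Z ⁻¹' (Set.Ioi (δ * t)) ⊆
      {ω | t < X ω ∧ (ρ + δ * s) * t < Y ω} := by
    intro ω hω
    obtain ⟨hX, hZ⟩ := hω
    simp only [Set.mem_preimage, Set.mem_Ioi] at hX hZ
    refine ⟨hX, ?_⟩
    rw [hY ω]
    have hρs : (ρ + δ * s) * t = ρ * t + s * (δ * t) := by ring
    rw [hρs]
    rcases lt_or_eq_of_le hρ0 with hρ | hρ
    · have h1 : ρ * t < ρ * X ω := by exact (mul_lt_mul_iff_right₀ hρ).2 hX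
      have h2 : s * (δ * t) ≤ s * Z ω := mul_le_mul_of_nonneg_left hZ.le hs0
      linarith
    · have hs1 : s = 1 := by rw [hs, ← hρ]; simp
      have h2 : s * (δ * t) < s * Z ω := by rw [hs1]; simpa using hZ
      nlinarith
  have hmono : P (X ⁻¹' (Set.Ioi t) ∩ Z ⁻¹' (Set.Ioi (δ * t))) ≤
      P {ω | t < X ω ∧ (ρ + δ * s) * t < Y ω} := measure_mono hsub
  have hprod : P (X ⁻¹' (Set.Ioi t) ∩ Z ⁻¹' (Set.Ioi (δ * t))) =
      (gaussianReal 0 1) (Set.Ioi t) * (gaussianReal 0 1) (Set.Ioi (δ * t)) := by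
    rw [hindep.measure_inter_preimage_eq_mul _ _ measurableSet_Ioi measurableSet_Ioi,
      ← Measure.map_apply_of_aemeasurable hXm measurableSet_Ioi,
      ← Measure.map_apply_of_aemeasurable hZm measurableSet_Ioi, hXlaw, hZlaw]
  have hQ : Q t * Q (δ * t) =
      ((gaussianReal 0 1) (Set.Ioi t) * (gaussianReal 0 1) (Set.Ioi (δ * t))).toReal := by
    rw [ENNReal.toReal_mul]; rfl
  rw [hQ, ← hprod]
  exact ENNReal.toReal_mono (measure_ne_top _ _) hmono
end

section
/- (Agreement guarantee of the template one-way common randomness scheme.) Let (Ω, P) be a probability space, n ≥ 1, and X, Y : Ω → ℝⁿ random vectors. Let C be a finite nonempty set of vectors in ℝⁿ, t, s ∈ ℝ, c ∈ ℕ, and χ : C → Fin 2^c a coloring such that for every v ∈ C the number of w ∈ C with w ≠ v and χ(w) = χ(v) is at most |C|·2^{−c}. For v ∈ C let A_v denote the event {⟨v,X⟩ > t and ⟨v,Y⟩ > s}. Assume that for all distinct v, w ∈ C: P({⟨w,X⟩ > t} ∩ A_v) ≤ P(A_v)/(4|C|) and P({⟨w,Y⟩ > s} ∩ A_v) ≤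 2^c · P(A_v)/(4|C|). For v ∈ C let E_v denote the event that A_v holds, ⟨w,X⟩ ≤ t for every w ∈ C with w ≠ v, and ⟨w,Y⟩ ≤ s for every w ∈ C with w ≠ v and χ(w) = χ(v). Then the events E_v are pairwise disjoint and P(⋃_{v∈C} E_v) ≥ (1/2)·Σ_{v∈C} P(A_v) ≥ (1/2)·|C|·min_{v∈C} P(A_v). -/
open MeasureTheory ProbabilityTheory Real
open scoped Classical

theorem template_agreement
    {Ω : Type*} [MeasurableSpace Ω] (P : Measure Ω) [IsProbabilityMeasure P]
    (n : ℕ) (hn : 1 ≤ n) (X Y : Ω → Fin n → ℝ)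
    (hXm : Measurable X) (hYm : Measurable Y)
    (C : Finset (Fin n → ℝ)) (hC : C.Nonempty)
    (t s : ℝ) (c : ℕ) (χ : (Fin n → ℝ) → Fin (2 ^ c))
    (hχ : ∀ v ∈ C, (({w ∈ C | w ≠ v ∧ χ w = χ v} : Finset (Fin n → ℝ)).card : ℝ) ≤
      (C.card : ℝ) / 2 ^ c)
    (A E : (Fin n → ℝ) → Set Ω)
    (hA : ∀ v, A v = {ω | t < ∑ i, v i * X ω i ∧ s < ∑ i, v i * Y ω i})
    (hTA : ∀ v ∈ C, ∀ w ∈ C, w ≠ v →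
      (P ({ω | t < ∑ i, w i * X ω i} ∩ A v)).toReal ≤ (P (A v)).toReal / (4 * C.card))
    (hTB : ∀ v ∈ C, ∀ w ∈ C, w ≠ v →
      (P ({ω | s < ∑ i, w i * Y ω i} ∩ A v)).toReal ≤
        2 ^ c * (P (A v)).toReal / (4 * C.card))
    (hE : ∀ v, E v = A v ∩ {ω | ∀ w ∈ C, w ≠ v → ∑ i, w i * X ω i ≤ t}
        ∩ {ω | ∀ w ∈ C, w ≠ v → χ w = χ v → ∑ i, w i * Y ω i ≤ s}) :
    (∀ v ∈ C, ∀ w ∈ C, v ≠ w → Disjoint (E v) (E w)) ∧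
    (1 / 2) * ∑ v ∈ C, (P (A v)).toReal ≤ (P (⋃ v ∈ C, E v)).toReal ∧
    (1 / 2) * C.card * (C.inf' hC fun v => (P (A v)).toReal) ≤
      (1 / 2) * ∑ v ∈ C, (P (A v)).toReal := by
  have hfX : ∀ v : Fin n → ℝ, Measurable fun ω => ∑ i, v i * X ω i := fun v =>
    Finset.measurable_sum _ fun i _ => measurable_const.mul ((measurable_pi_apply i).comp hXm)
  have hfY : ∀ v : Fin n → ℝ, Measurable fun ω => ∑ i, v i * Y ω i := fun v =>
    Finset.measurable_sum _ fun i _ => measurable_const.mul ((measurable_pi_apply i).comp hYm)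
  have hAm : ∀ v, MeasurableSet (A v) := by
    intro v; rw [hA]
    exact (measurableSet_lt measurable_const (hfX v)).inter
      (measurableSet_lt measurable_const (hfY v))
  have hEm : ∀ v, MeasurableSet (E v) := by
    intro v; rw [hE]
    refine ((hAm v).inter ?_).inter ?_
    · have h : {ω | ∀ w ∈ C, w ≠ v → ∑ i, w i * X ω i ≤ t}
        = ⋂ w ∈ C, ⋂ _ : w ≠ v, {ω | ∑ i, w i * X ω i ≤ t} := by
        ext ω; simp
      rw [h]
      exact MeasurableSet.biInter C.countable_toSet fun w _ =>
        MeasurableSet.iInter fun _ => measurableSet_le (hfX w) measurable_const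
    · have h : {ω | ∀ w ∈ C, w ≠ v → χ w = χ v → ∑ i, w i * Y ω i ≤ s}
        = ⋂ w ∈ C, ⋂ _ : w ≠ v, ⋂ _ : χ w = χ v, {ω | ∑ i, w i * Y ω i ≤ s} := by
        ext ω; simp
      rw [h]
      exact MeasurableSet.biInter C.countable_toSet fun w _ =>
        MeasurableSet.iInter fun _ => MeasurableSet.iInter fun _ =>
          measurableSet_le (hfY w) measurable_const
  have hdisj : ∀ v ∈ C, ∀ w ∈ C, v ≠ w → Disjoint (E v) (E w) := by
    intro v hv w hw hvw
    rw [Set.disjoint_left]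
    intro ω hωv hωw
    rw [hE] at hωv hωw
    have h1 : t < ∑ i, v i * X ω i := by
      have := hωv.1.1; rw [hA] at this; exact this.1
    have h2 : ∑ i, v i * X ω i ≤ t := hωw.1.2 v hv hvw
    linarith
  have hCpos : (0:ℝ) < C.card := by exact_mod_cast Finset.card_pos.mpr hC
  have hkey : ∀ v ∈ C, (P (A v)).toReal / 2 ≤ (P (E v)).toReal := by
    intro v hv
    set B1 : Set Ω := ⋃ w ∈ C.filter (fun w => w ≠ v),
      ({ω | t < ∑ i, w i * X ω i} ∩ A v) with hB1
    set B2 : Set Ω := ⋃ w ∈ C.filter (fun w => w ≠ v ∧ χ w = χ v),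
      ({ω | s < ∑ i, w i * Y ω i} ∩ A v) with hB2
    have hsub : A v ⊆ E v ∪ (B1 ∪ B2) := by
      intro ω hω
      by_cases hb : ω ∈ B1 ∪ B2
      · exact Or.inr hb
      · left
        rw [hE]
        refine ⟨⟨hω, ?_⟩, ?_⟩
        · intro w hw hwv
          by_contra hlt
          push_neg at hlt
          exact hb (Or.inl (Set.mem_biUnion (Finset.mem_filter.mpr ⟨hw, hwv⟩) ⟨hlt, hω⟩))
        · intro w hw hwv hχw
          by_contra hlt
          push_neg at hlt
          exact hb (Or.inr (Set.mem_biUnion (Finset.mem_filter.mpr ⟨hw, hwv, hχw⟩) ⟨hlt, hω⟩))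
    have hmeas : P (A v) ≤ P (E v) + (P B1 + P B2) :=
      (measure_mono hsub).trans ((measure_union_le _ _).trans
        (add_le_add le_rfl (measure_union_le _ _)))
    have hfin : ∀ S : Set Ω, P S ≠ ⊤ := fun S => measure_ne_top P S
    have hR : (P (A v)).toReal ≤ (P (E v)).toReal + ((P B1).toReal + (P B2).toReal) := by
      have := ENNReal.toReal_mono (ENNReal.add_ne_top.mpr ⟨hfin _, ENNReal.add_ne_top.mpr ⟨hfin _, hfin _⟩⟩) hmeas
      rwa [ENNReal.toReal_add (hfin _) (ENNReal.add_ne_top.mpr ⟨hfin _, hfin _⟩),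
        ENNReal.toReal_add (hfin _) (hfin _)] at this
    have hB1le : (P B1).toReal ≤ (P (A v)).toReal / 4 := by
      have h1 : P B1 ≤ ∑ w ∈ C.filter (fun w => w ≠ v),
          P ({ω | t < ∑ i, w i * X ω i} ∩ A v) := measure_biUnion_finset_le _ _
      have h2 : (P B1).toReal ≤ ∑ w ∈ C.filter (fun w => w ≠ v),
          (P ({ω | t < ∑ i, w i * X ω i} ∩ A v)).toReal := by
        rw [← ENNReal.toReal_sum (fun a _ => hfin _)]
        exact ENNReal.toReal_mono (by
          exact (ENNReal.sum_lt_top.mpr fun a _ => (hfin _).lt_top).ne) h1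
      refine h2.trans ?_
      calc ∑ w ∈ C.filter (fun w => w ≠ v),
          (P ({ω | t < ∑ i, w i * X ω i} ∩ A v)).toReal
          ≤ ∑ w ∈ C.filter (fun w => w ≠ v), (P (A v)).toReal / (4 * C.card) := by
            refine Finset.sum_le_sum fun w hw => ?_
            obtain ⟨hwC, hwv⟩ := Finset.mem_filter.mp hw
            exact hTA v hv w hwC hwv
        _ = (C.filter (fun w => w ≠ v)).card * ((P (A v)).toReal / (4 * C.card)) := by
            rw [Finset.sum_const, nsmul_eq_mul]
        _ ≤ C.card * ((P (A v)).toReal / (4 * C.card)) := by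
            refine mul_le_mul_of_nonneg_right ?_ (by positivity)
            exact_mod_cast Finset.card_filter_le _ _
        _ = (P (A v)).toReal / 4 := by field_simp
    have hB2le : (P B2).toReal ≤ (P (A v)).toReal / 4 := by
      have h1 : P B2 ≤ ∑ w ∈ C.filter (fun w => w ≠ v ∧ χ w = χ v),
          P ({ω | s < ∑ i, w i * Y ω i} ∩ A v) := measure_biUnion_finset_le _ _
      have h2 : (P B2).toReal ≤ ∑ w ∈ C.filter (fun w => w ≠ v ∧ χ w = χ v),
          (P ({ω | s < ∑ i, w i * Y ω i} ∩ A v)).toReal := by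
        rw [← ENNReal.toReal_sum (fun a _ => hfin _)]
        exact ENNReal.toReal_mono (by
          exact (ENNReal.sum_lt_top.mpr fun a _ => (hfin _).lt_top).ne) h1
      refine h2.trans ?_
      have hcard : ((C.filter (fun w => w ≠ v ∧ χ w = χ v)).card : ℝ) ≤ (C.card : ℝ) / 2 ^ c :=
        hχ v hv
      calc ∑ w ∈ C.filter (fun w => w ≠ v ∧ χ w = χ v),
          (P ({ω | s < ∑ i, w i * Y ω i} ∩ A v)).toReal
          ≤ ∑ w ∈ C.filter (fun w => w ≠ v ∧ χ w = χ v),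
            2 ^ c * (P (A v)).toReal / (4 * C.card) := by
            refine Finset.sum_le_sum fun w hw => ?_
            obtain ⟨hwC, hwv, hχw⟩ := Finset.mem_filter.mp hw
            exact hTB v hv w hwC hwv
        _ = (C.filter (fun w => w ≠ v ∧ χ w = χ v)).card *
            (2 ^ c * (P (A v)).toReal / (4 * C.card)) := by
            rw [Finset.sum_const, nsmul_eq_mul]
        _ ≤ ((C.card : ℝ) / 2 ^ c) * (2 ^ c * (P (A v)).toReal / (4 * C.card)) :=
            mul_le_mul_of_nonneg_right hcard (by positivity)
        _ = (P (A v)).toReal / 4 := by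
            have h2c : (0:ℝ) < 2 ^ c := by positivity
            field_simp
    linarith
  refine ⟨hdisj, ?_, ?_⟩
  · have hsum : P (⋃ v ∈ C, E v) = ∑ v ∈ C, P (E v) :=
      measure_biUnion_finset (fun v hv w hw hvw => hdisj v hv w hw hvw) (fun v _ => hEm v)
    rw [hsum, ENNReal.toReal_sum (fun a _ => measure_ne_top P _)]
    calc (1/2 : ℝ) * ∑ v ∈ C, (P (A v)).toReal = ∑ v ∈ C, (P (A v)).toReal / 2 := by
          rw [Finset.mul_sum]; exact Finset.sum_congr rfl fun v _ => by ring
      _ ≤ ∑ v ∈ C, (P (E v)).toReal := Finset.sum_le_sum hkey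
  · have h : (C.card : ℝ) * (C.inf' hC fun v => (P (A v)).toReal) ≤
        ∑ v ∈ C, (P (A v)).toReal := by
      calc (C.card : ℝ) * (C.inf' hC fun v => (P (A v)).toReal)
          = ∑ _v ∈ C, (C.inf' hC fun v => (P (A v)).toReal) := by
            rw [Finset.sum_const, nsmul_eq_mul]
        _ ≤ ∑ v ∈ C, (P (A v)).toReal :=
            Finset.sum_le_sum fun v hv => Finset.inf'_le _ hv
    linarith
end

section
/- (Binomial tail upper bound in terms of the Gaussian tail.) There exists a constant C > 0 such that for every integer n ≥ 1 and every real u ≥ 0, if X is uniformly distributed on {0,1}^n then P(|wt(X) − n/2| ≥ u·√n/2) ≤ C·n²·Q(u). -/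
open MeasureTheory ProbabilityTheory Real
open scoped Classical

/-- Hamming weight of a binary string. -/
def wt {n : ℕ} (x : Fin n → Bool) : ℕ := (Finset.univ.filter fun i => x i = true).card

lemma sum_exp_wt (n : ℕ) (s : ℝ) :
    ∑ x : Fin n → Bool, Real.exp (s * ((wt x : ℝ) - n/2)) =
      (Real.exp (s * (1 - 1/2)) + Real.exp (s * (0 - 1/2)))^n := by
  have hwt : ∀ x : Fin n → Bool, (wt x : ℝ) = ∑ i, (if x i = true then (1:ℝ) else 0) := by
    intro x
    rw [wt, Finset.card_filter]
    push_cast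
    rfl
  have hhalf : (n:ℝ)/2 = ∑ _i : Fin n, (1/2:ℝ) := by
    simp [Finset.sum_const, Finset.card_fin]
    ring
  have hterm : ∀ x : Fin n → Bool, Real.exp (s * ((wt x : ℝ) - n/2)) =
      ∏ i, Real.exp (s * ((if x i = true then (1:ℝ) else 0) - 1/2)) := by
    intro x
    rw [← Real.exp_sum]
    congr 1
    rw [hwt, hhalf, ← Finset.sum_sub_distrib, Finset.mul_sum]
  simp_rw [hterm]
  rw [← Fintype.prod_sum (fun (_ : Fin n) (b : Bool) =>
    Real.exp (s * ((if b = true then (1:ℝ) else 0) - 1/2)))]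
  simp [Fintype.sum_bool]

lemma chernoff (n : ℕ) (hn : 1 ≤ n) (u : ℝ) (hu : 0 ≤ u) :
    ((Finset.univ.filter fun x : Fin n → Bool =>
        u * Real.sqrt n / 2 ≤ |(wt x : ℝ) - n / 2|).card : ℝ) ≤
      2 * Real.exp (-u^2/2) * 2^n := by
  have hn0 : (0:ℝ) < n := by exact_mod_cast hn
  have hsn : 0 < Real.sqrt n := Real.sqrt_pos.2 hn0
  set L : ℝ := 2*u/Real.sqrt n with hL
  have hL0 : 0 ≤ L := by positivity
  set t : ℝ := u * Real.sqrt n / 2 with ht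
  set F := Finset.univ.filter fun x : Fin n → Bool => t ≤ |(wt x : ℝ) - n / 2| with hF
  -- pointwise bound on the event
  have hpt : ∀ x ∈ F, Real.exp (L*t) ≤
      Real.exp (L * ((wt x : ℝ) - n/2)) + Real.exp ((-L) * ((wt x : ℝ) - n/2)) := by
    intro x hx
    rw [hF, Finset.mem_filter] at hx
    have habs : L*t ≤ L * |(wt x : ℝ) - n/2| := by
      apply mul_le_mul_of_nonneg_left hx.2 hL0
    rcases abs_cases ((wt x : ℝ) - n/2) with ⟨h1, _⟩ | ⟨h1, _⟩
    · have : Real.exp (L*t) ≤ Real.exp (L * ((wt x : ℝ) - n/2)) := by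
        apply Real.exp_le_exp.2; rw [← h1]; exact habs
      linarith [Real.exp_pos ((-L) * ((wt x : ℝ) - n/2))]
    · have : Real.exp (L*t) ≤ Real.exp ((-L) * ((wt x : ℝ) - n/2)) := by
        apply Real.exp_le_exp.2
        calc L*t ≤ L * |(wt x : ℝ) - n/2| := habs
          _ = (-L) * ((wt x : ℝ) - n/2) := by rw [h1]; ring
      linarith [Real.exp_pos (L * ((wt x : ℝ) - n/2))]
  have hcard : (F.card : ℝ) * Real.exp (L*t) ≤
      ∑ x : Fin n → Bool, (Real.exp (L * ((wt x : ℝ) - n/2)) +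
        Real.exp ((-L) * ((wt x : ℝ) - n/2))) := by
    calc (F.card : ℝ) * Real.exp (L*t)
        = ∑ _x ∈ F, Real.exp (L*t) := by rw [Finset.sum_const, nsmul_eq_mul]
      _ ≤ ∑ x ∈ F, (Real.exp (L * ((wt x : ℝ) - n/2)) +
          Real.exp ((-L) * ((wt x : ℝ) - n/2))) := Finset.sum_le_sum hpt
      _ ≤ ∑ x : Fin n → Bool, (Real.exp (L * ((wt x : ℝ) - n/2)) +
          Real.exp ((-L) * ((wt x : ℝ) - n/2))) := by
          apply Finset.sum_le_sum_of_subset_of_nonneg (Finset.subset_univ F)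
          intro x _ _
          positivity
  have hsum : ∑ x : Fin n → Bool, (Real.exp (L * ((wt x : ℝ) - n/2)) +
      Real.exp ((-L) * ((wt x : ℝ) - n/2))) =
      2 * (Real.exp (L/2) + Real.exp (-(L/2)))^n := by
    rw [Finset.sum_add_distrib, sum_exp_wt, sum_exp_wt]
    have e1 : L * (1 - 1/2) = L/2 := by ring
    have e2 : L * (0 - 1/2) = -(L/2) := by ring
    have e3 : (-L) * (1 - 1/2) = -(L/2) := by ring
    have e4 : (-L) * (0 - 1/2) = L/2 := by ring
    rw [e1, e2, e3, e4, add_comm (Real.exp (-(L/2)))]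
    ring
  have hcosh : (Real.exp (L/2) + Real.exp (-(L/2)))^n ≤ 2^n * Real.exp (n * (L^2/8)) := by
    have h1 : Real.exp (L/2) + Real.exp (-(L/2)) = 2 * Real.cosh (L/2) := by
      rw [Real.cosh_eq]; ring
    have h2 : Real.cosh (L/2) ≤ Real.exp ((L/2)^2/2) := Real.cosh_le_exp_half_sq _
    calc (Real.exp (L/2) + Real.exp (-(L/2)))^n
        ≤ (2 * Real.exp ((L/2)^2/2))^n := by
          apply pow_le_pow_left₀ (by positivity)
          rw [h1]; linarith
      _ = 2^n * Real.exp ((L/2)^2/2)^n := mul_pow _ _ _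
      _ = 2^n * Real.exp (n * (L^2/8)) := by
          rw [← Real.exp_nat_mul]
          congr 1
          ring
  have hexpo : (n:ℝ) * (L^2/8) - L*t = -u^2/2 := by
    have hsq : Real.sqrt n ^ 2 = (n:ℝ) := Real.sq_sqrt (le_of_lt hn0)
    rw [hL, ht]
    field_simp
    nlinarith [hsq, hsn]
  have final : (F.card : ℝ) ≤ 2 * 2^n * Real.exp ((n:ℝ) * (L^2/8) - L*t) := by
    have hepos : 0 < Real.exp (L*t) := Real.exp_pos _
    have h : (F.card : ℝ) * Real.exp (L*t) ≤ 2 * 2^n * Real.exp ((n:ℝ) * (L^2/8)) := by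
      refine hcard.trans ?_
      rw [hsum]
      calc 2 * (Real.exp (L/2) + Real.exp (-(L/2)))^n
          ≤ 2 * (2^n * Real.exp ((n:ℝ) * (L^2/8))) := by linarith
        _ = 2 * 2^n * Real.exp ((n:ℝ) * (L^2/8)) := by ring
    rw [Real.exp_sub, ← mul_div_assoc, le_div_iff₀ hepos]
    exact h
  rw [hexpo] at final
  calc (F.card : ℝ) ≤ 2 * 2^n * Real.exp (-u^2/2) := final
    _ = 2 * Real.exp (-u^2/2) * 2^n := by ring

lemma gauss_lower (u : ℝ) (hu : 0 ≤ u) : Real.exp (-u^2/2) ≤ 54 * (u+1) * Q u := by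
  set δ : ℝ := (u+1)⁻¹ with hδ
  have hup : (0:ℝ) < u + 1 := by linarith
  have hδpos : 0 < δ := by positivity
  have hδ1 : δ ≤ 1 := by rw [hδ]; rw [inv_le_one_iff₀]; right; linarith
  have huδ : u * δ ≤ 1 := by
    rw [hδ, mul_inv_le_iff₀ hup]; linarith
  have hQ : Q u = ∫ x in Set.Ioi u, gaussianPDFReal 0 1 x := by
    rw [Q, gaussianReal_apply_eq_integral 0 one_ne_zero,
      ENNReal.toReal_ofReal (setIntegral_nonneg measurableSet_Ioi
        fun x _ => gaussianPDFReal_nonneg 0 1 x)]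
  set c : ℝ := gaussianPDFReal 0 1 (u + δ) with hc
  have hstep1 : ∫ x in Set.Ioc u (u+δ), gaussianPDFReal 0 1 x ≤
      ∫ x in Set.Ioi u, gaussianPDFReal 0 1 x := by
    apply setIntegral_mono_set (integrable_gaussianPDFReal 0 1).integrableOn
      (ae_of_all _ fun x => gaussianPDFReal_nonneg 0 1 x)
    exact HasSubset.Subset.eventuallyLE Set.Ioc_subset_Ioi_self
  have hstep2 : δ * c ≤ ∫ x in Set.Ioc u (u+δ), gaussianPDFReal 0 1 x := by
    have : ∫ _x in Set.Ioc u (u+δ), c = δ * c := by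
      rw [setIntegral_const, measureReal_def, Real.volume_Ioc, smul_eq_mul]
      congr 1
      rw [ENNReal.toReal_ofReal (by linarith)]
      ring
    rw [← this]
    apply setIntegral_mono_on (integrableOn_const (μ := volume) (s := Set.Ioc u (u+δ)) (by simp))
      (integrable_gaussianPDFReal 0 1).integrableOn measurableSet_Ioc
    intro x hx
    rw [hc]
    simp only [gaussianPDFReal, NNReal.coe_one, mul_one, sub_zero]
    gcongr
    · linarith [hx.1]
    · exact hx.2
  have hceq : c = (Real.sqrt (2*π))⁻¹ * Real.exp (-(u+δ)^2/2) := by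
    rw [hc]; simp [gaussianPDFReal]
  have hexp : Real.exp (-(u+δ)^2/2) ≥ Real.exp (-3/2) * Real.exp (-u^2/2) := by
    rw [← Real.exp_add]
    apply Real.exp_le_exp.2
    have : (u+δ)^2 ≤ u^2 + 3 := by nlinarith
    linarith
  have hQlb : δ * c ≤ Q u := by rw [hQ]; exact hstep2.trans hstep1
  have hconst : Real.sqrt (2*π) * Real.exp (3/2) ≤ 54 := by
    have h1 : Real.sqrt (2*π) ≤ 3 := by
      rw [show (3:ℝ) = Real.sqrt 9 by rw [show (9:ℝ) = 3^2 by norm_num, Real.sqrt_sq]; norm_num]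
      apply Real.sqrt_le_sqrt
      nlinarith [Real.pi_lt_d2]
    have h2 : Real.exp (3/2) ≤ 9 := by
      calc Real.exp (3/2) ≤ Real.exp 2 := Real.exp_le_exp.2 (by norm_num)
        _ = Real.exp 1 * Real.exp 1 := by rw [← Real.exp_add]; norm_num
        _ ≤ 3 * 3 := by
            have := Real.exp_one_lt_d9
            nlinarith [Real.exp_pos 1]
        _ = 9 := by norm_num
    nlinarith [Real.sqrt_nonneg (2*π), Real.exp_pos (3/2)]
  -- combine
  have hsqrt2pi : 0 < Real.sqrt (2*π) := Real.sqrt_pos.2 (by positivity)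
  have key : Real.exp (-u^2/2) ≤ Real.sqrt (2*π) * Real.exp (3/2) * (u+1) * (δ * c) := by
    rw [hceq]
    have hδu : (u+1) * δ = 1 := by rw [hδ]; field_simp
    calc Real.exp (-u^2/2)
        = Real.sqrt (2*π) * Real.exp (3/2) * (u+1) *
          (δ * ((Real.sqrt (2*π))⁻¹ * (Real.exp (-3/2) * Real.exp (-u^2/2)))) := by
          rw [show Real.sqrt (2*π) * Real.exp (3/2) * (u+1) *
            (δ * ((Real.sqrt (2*π))⁻¹ * (Real.exp (-3/2) * Real.exp (-u^2/2))))
            = ((u+1) * δ) * (Real.sqrt (2*π) * (Real.sqrt (2*π))⁻¹) *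
              (Real.exp (3/2) * Real.exp (-3/2)) * Real.exp (-u^2/2) by ring,
            hδu, mul_inv_cancel₀ (ne_of_gt hsqrt2pi), ← Real.exp_add]
          norm_num
      _ ≤ Real.sqrt (2*π) * Real.exp (3/2) * (u+1) *
          (δ * ((Real.sqrt (2*π))⁻¹ * Real.exp (-(u+δ)^2/2))) := by
          gcongr
  calc Real.exp (-u^2/2) ≤ Real.sqrt (2*π) * Real.exp (3/2) * (u+1) * (δ*c) := key
    _ ≤ 54 * (u+1) * Q u := by
        have hc0 : 0 ≤ δ * c := by
          have := gaussianPDFReal_nonneg 0 1 (u+δ); positivity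
        calc Real.sqrt (2*π) * Real.exp (3/2) * (u+1) * (δ*c)
            ≤ 54 * (u+1) * (δ*c) := by gcongr
          _ ≤ 54 * (u+1) * Q u := by gcongr

theorem binomial_tail_upper_bound :
    ∃ C : ℝ, 0 < C ∧ ∀ n : ℕ, 1 ≤ n → ∀ u : ℝ, 0 ≤ u →
      ((Finset.univ.filter fun x : Fin n → Bool =>
          u * Real.sqrt n / 2 ≤ |(wt x : ℝ) - n / 2|).card : ℝ) / 2 ^ n ≤
        C * n ^ 2 * Q u := by
  refine ⟨216, by norm_num, fun n hn u hu => ?_⟩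
  have hQ0 : (0:ℝ) ≤ Q u := ENNReal.toReal_nonneg
  have hn0 : (0:ℝ) < n := by exact_mod_cast hn
  have h2n : (0:ℝ) < 2^n := by positivity
  by_cases hcase : u ≤ Real.sqrt n
  · have h1 := chernoff n hn u hu
    have h2 := gauss_lower u hu
    have hun : u + 1 ≤ 2 * (n:ℝ)^2 := by
      have hn1 : (1:ℝ) ≤ n := by exact_mod_cast hn
      have hs : Real.sqrt n ≤ n := by
        calc Real.sqrt n ≤ Real.sqrt ((n:ℝ)^2) := Real.sqrt_le_sqrt (by nlinarith)
          _ = n := Real.sqrt_sq hn0.le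
      nlinarith
    calc ((Finset.univ.filter fun x : Fin n → Bool =>
          u * Real.sqrt n / 2 ≤ |(wt x : ℝ) - n / 2|).card : ℝ) / 2 ^ n
        ≤ 2 * Real.exp (-u^2/2) := by
          rw [div_le_iff₀ h2n]
          calc ((Finset.univ.filter fun x : Fin n → Bool =>
              u * Real.sqrt n / 2 ≤ |(wt x : ℝ) - n / 2|).card : ℝ)
              ≤ 2 * Real.exp (-u^2/2) * 2^n := h1
            _ = 2 * Real.exp (-u^2/2) * 2^n := rfl
      _ ≤ 2 * (54 * (u+1) * Q u) := by linarith
      _ = 108 * (u+1) * Q u := by ring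
      _ ≤ 216 * (n:ℝ)^2 * Q u := by nlinarith
  · push_neg at hcase
    have hempty : (Finset.univ.filter fun x : Fin n → Bool =>
        u * Real.sqrt n / 2 ≤ |(wt x : ℝ) - n / 2|) = ∅ := by
      rw [Finset.filter_eq_empty_iff]
      intro x _
      push_neg
      have hwtle : (wt x : ℝ) ≤ n := by
        have : wt x ≤ n := by
          rw [wt]
          calc (Finset.univ.filter fun i => x i = true).card
              ≤ (Finset.univ : Finset (Fin n)).card := Finset.card_filter_le _ _
            _ = n := Finset.card_fin n
        exact_mod_cast this
      have hwt0 : (0:ℝ) ≤ (wt x : ℝ) := Nat.cast_nonneg _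
      have habs : |(wt x : ℝ) - n / 2| ≤ n/2 := by
        rw [abs_le]; constructor <;> linarith
      have hsn : 0 < Real.sqrt n := Real.sqrt_pos.2 hn0
      have : (n:ℝ) < u * Real.sqrt n := by
        calc (n:ℝ) = Real.sqrt n * Real.sqrt n := (Real.mul_self_sqrt (le_of_lt hn0)).symm
          _ < u * Real.sqrt n := by
            apply mul_lt_mul_of_pos_right hcase hsn
      linarith
    rw [hempty]
    simp only [Finset.card_empty, Nat.cast_zero, zero_div]
    positivity
end

section
/- (Binomial tail lower bound in terms of the Gaussian tail.) There exists a constant c > 0 such that for every integer n ≥ 2 and every real t with 0 ≤ t ≤ n^{1/4}, if X is uniformly distributed on {0,1}^n and r = ⌊n/2 − t·√n/2⌋, then P(wt(X) ≤ r) ≥ c·Q(t)/√n. -/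
open MeasureTheory ProbabilityTheory Real
open scoped Classical

lemma Q_nonneg (t : ℝ) : 0 ≤ Q t := ENNReal.toReal_nonneg

lemma Q_le_one (t : ℝ) : Q t ≤ 1 := by
  have h := prob_le_one (μ := gaussianReal 0 1) (s := Set.Ioi t)
  rw [Q]
  exact ENNReal.toReal_le_of_le_ofReal one_pos.le (by simpa using h)

lemma Q_le_exp {t : ℝ} (ht : 0 ≤ t) : Q t ≤ Real.exp (-(t ^ 2 / 2)) := by
  have h0 : ∀ x, 0 ≤ gaussianPDFReal 0 1 x := fun x => gaussianPDFReal_nonneg _ _ _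
  have hQ : Q t = ∫ x in Set.Ioi t, gaussianPDFReal 0 1 x := by
    rw [Q, gaussianReal_apply_eq_integral 0 one_ne_zero, ENNReal.toReal_ofReal]
    exact setIntegral_nonneg measurableSet_Ioi fun x _ => h0 x
  rw [hQ]
  have hmono : ∫ x in Set.Ioi t, gaussianPDFReal 0 1 x ≤
      ∫ x in Set.Ioi t, Real.exp (-(t ^ 2 / 2)) * gaussianPDFReal t 1 x := by
    refine setIntegral_mono_on ((integrable_gaussianPDFReal 0 1).restrict)
      (((integrable_gaussianPDFReal t 1).const_mul _).restrict) measurableSet_Ioi ?_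
    intro x hx
    simp only [Set.mem_Ioi] at hx
    simp only [gaussianPDFReal, NNReal.coe_one, mul_one, sub_zero]
    have key : Real.exp (-x ^ 2 / 2) ≤ Real.exp (-(t ^ 2 / 2)) * Real.exp (-(x - t) ^ 2 / 2) := by
      rw [← Real.exp_add]
      apply Real.exp_le_exp.2
      nlinarith [mul_nonneg ht (sub_nonneg.2 hx.le)]
    calc (Real.sqrt (2 * π))⁻¹ * Real.exp (-x ^ 2 / 2)
        ≤ (Real.sqrt (2 * π))⁻¹ * (Real.exp (-(t ^ 2 / 2)) * Real.exp (-(x - t) ^ 2 / 2)) := by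
          exact mul_le_mul_of_nonneg_left key (inv_nonneg.2 (Real.sqrt_nonneg _))
      _ = Real.exp (-(t ^ 2 / 2)) * ((Real.sqrt (2 * π))⁻¹ * Real.exp (-(x - t) ^ 2 / 2)) := by
          ring
  have h2 : ∫ x in Set.Ioi t, Real.exp (-(t ^ 2 / 2)) * gaussianPDFReal t 1 x
      = Real.exp (-(t ^ 2 / 2)) * ∫ x in Set.Ioi t, gaussianPDFReal t 1 x :=
    integral_const_mul _ _
  have h3 : ∫ x in Set.Ioi t, gaussianPDFReal t 1 x ≤ ∫ x, gaussianPDFReal t 1 x :=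
    setIntegral_le_integral (integrable_gaussianPDFReal t 1)
      (ae_of_all _ fun x => gaussianPDFReal_nonneg _ _ _)
  rw [integral_gaussianPDFReal_eq_one t one_ne_zero] at h3
  calc ∫ x in Set.Ioi t, gaussianPDFReal 0 1 x
      ≤ Real.exp (-(t ^ 2 / 2)) * ∫ x in Set.Ioi t, gaussianPDFReal t 1 x := by rw [← h2]; exact hmono
    _ ≤ Real.exp (-(t ^ 2 / 2)) * 1 := by
        exact mul_le_mul_of_nonneg_left h3 (Real.exp_nonneg _)
    _ = Real.exp (-(t ^ 2 / 2)) := mul_one _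

lemma card_wt_eq (n k : ℕ) :
    (Finset.univ.filter fun x : Fin n → Bool => wt x = k).card = n.choose k := by
  have hc : n.choose k = (Finset.powersetCard k (Finset.univ : Finset (Fin n))).card := by
    rw [Finset.card_powersetCard, Finset.card_univ, Fintype.card_fin]
  rw [hc]
  refine Finset.card_nbij' (i := fun x => Finset.univ.filter fun i => x i = true)
    (j := fun s => fun i => decide (i ∈ s)) ?_ ?_ ?_ ?_
  · intro x hx
    rw [Finset.mem_coe, Finset.mem_powersetCard_univ]
    exact (Finset.mem_filter.1 hx).2
  · intro s hs
    rw [Finset.mem_coe, Finset.mem_powersetCard_univ] at hs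
    rw [Finset.mem_coe, Finset.mem_filter]
    refine ⟨Finset.mem_univ _, ?_⟩
    rw [← hs, wt]
    congr 1
    ext i
    simp
  · intro x hx
    funext i
    simp
  · intro s hs
    ext i
    simp

lemma sixteen_pow_le (m : ℕ) (hm : 1 ≤ m) : 16 ^ m ≤ 4 * m * Nat.centralBinom m ^ 2 := by
  induction m with
  | zero => omega
  | succ k ih =>
    rcases Nat.lt_or_ge k 1 with h1 | h1
    · interval_cases k
      simp [Nat.centralBinom]
    · have ih' := ih h1
      have key := Nat.succ_mul_centralBinom_succ k
      have expand : (k+1)^2 * (4 * (k+1) * Nat.centralBinom (k+1) ^ 2)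
          = 4*(k+1)*(2*(2*k+1)*Nat.centralBinom k)^2 := by
        rw [← key]; ring
      have quad : 4*k*(k+1) ≤ (2*k+1)^2 := by
        calc 4*k*(k+1) ≤ 4*k*(k+1)+1 := Nat.le_succ _
          _ = (2*k+1)^2 := by ring
      have step : (k+1)^2 * 16^(k+1) ≤ 4*(k+1)*(2*(2*k+1)*Nat.centralBinom k)^2 := by
        calc (k+1)^2 * 16^(k+1) = 16 * (k+1)^2 * 16^k := by ring
          _ ≤ 16 * (k+1)^2 * (4*k*Nat.centralBinom k ^ 2) := Nat.mul_le_mul_left _ ih'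
          _ = (4*k*(k+1)) * (16 * (k+1) * Nat.centralBinom k ^ 2) := by ring
          _ ≤ ((2*k+1)^2) * (16 * (k+1) * Nat.centralBinom k ^ 2) :=
            Nat.mul_le_mul_right _ quad
          _ = 4*(k+1)*(2*(2*k+1)*Nat.centralBinom k)^2 := by ring
      rw [← expand] at step
      exact Nat.le_of_mul_le_mul_left step (by positivity)

lemma choose_half_ge (n : ℕ) (hn : 2 ≤ n) :
    (2:ℝ)^n ≤ 4 * Real.sqrt n * (n.choose (n/2)) := by
  set m := n / 2 with hm
  have hm1 : 1 ≤ m := by omega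
  have h := sixteen_pow_le m hm1
  have hR : ((16:ℝ))^m ≤ 4 * m * (Nat.centralBinom m : ℝ)^2 := by exact_mod_cast h
  have hsq : Real.sqrt m ^ 2 = (m:ℝ) := Real.sq_sqrt (by positivity)
  have h4 : (4:ℝ)^m ≤ 2 * Real.sqrt m * Nat.centralBinom m := by
    have h1 : ((4:ℝ)^m)^2 ≤ (2 * Real.sqrt m * Nat.centralBinom m)^2 := by
      calc ((4:ℝ)^m)^2 = 16^m := by rw [← pow_mul, pow_mul']; norm_num
        _ ≤ 4 * m * (Nat.centralBinom m : ℝ)^2 := hR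
        _ = (2 * Real.sqrt m * Nat.centralBinom m)^2 := by rw [mul_pow, mul_pow, hsq]; ring
    have h2 : (0:ℝ) ≤ 2 * Real.sqrt m * Nat.centralBinom m := by positivity
    calc (4:ℝ)^m = Real.sqrt (((4:ℝ)^m)^2) := (Real.sqrt_sq (by positivity)).symm
      _ ≤ Real.sqrt ((2 * Real.sqrt m * Nat.centralBinom m)^2) := Real.sqrt_le_sqrt h1
      _ = 2 * Real.sqrt m * Nat.centralBinom m := Real.sqrt_sq h2
  have hmn : Real.sqrt m ≤ Real.sqrt n := Real.sqrt_le_sqrt (by exact_mod_cast Nat.div_le_self n 2)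
  have hCpos : (0:ℝ) ≤ (Nat.centralBinom m : ℝ) := by positivity
  have hcb : (Nat.centralBinom m : ℝ) ≤ (n.choose m : ℝ) := by
    have : Nat.centralBinom m ≤ n.choose m := by
      rw [Nat.centralBinom]
      exact Nat.choose_le_choose m (by omega)
    exact_mod_cast this
  rcases Nat.even_or_odd n with ⟨p, hp⟩ | ⟨p, hp⟩
  · have hne : n = 2 * m := by omega
    have : (2:ℝ)^n = 4^m := by rw [hne, pow_mul]; norm_num
    rw [this]
    calc (4:ℝ)^m ≤ 2 * Real.sqrt m * Nat.centralBinom m := h4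
      _ ≤ 4 * Real.sqrt n * (n.choose m) := by
        apply mul_le_mul _ hcb hCpos (by positivity)
        nlinarith [Real.sqrt_nonneg (m:ℝ), Real.sqrt_nonneg (n:ℝ)]
  · have hno : n = 2 * m + 1 := by omega
    have : (2:ℝ)^n = 2 * 4^m := by rw [hno, pow_succ, pow_mul]; ring_nf
    rw [this]
    calc (2:ℝ) * 4^m ≤ 2 * (2 * Real.sqrt m * Nat.centralBinom m) := by linarith
      _ = 4 * Real.sqrt m * Nat.centralBinom m := by ring
      _ ≤ 4 * Real.sqrt n * (n.choose m) := by
        apply mul_le_mul _ hcb hCpos (by positivity)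
        nlinarith [Real.sqrt_nonneg (m:ℝ), Real.sqrt_nonneg (n:ℝ)]

lemma ratio_ge_exp {z : ℝ} (h0 : 0 ≤ z) (h5 : z ≤ 1/5) :
    Real.exp (-(2*z + 3*z^3)) ≤ (1 - z) / (1 + z) := by
  set w := 2*z + 3*z^3 with hw
  have hw0 : 0 ≤ w := by positivity
  have hq : 1 + w + w^2/2 ≤ Real.exp w := Real.quadratic_le_exp_of_nonneg hw0
  have hpos : (0:ℝ) < 1 + w + w^2/2 := by positivity
  have h1z : (0:ℝ) < 1 + z := by linarith
  have e1 : Real.exp (-w) ≤ (1 + w + w^2/2)⁻¹ := by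
    rw [Real.exp_neg]
    exact inv_anti₀ hpos hq
  refine e1.trans ?_
  rw [inv_eq_one_div, div_le_div_iff₀ hpos h1z]
  have key : 1 * (1 + z) ≤ (1 - z) * (1 + w + w^2/2) := by
    rw [hw]
    nlinarith [pow_nonneg h0 3, pow_nonneg h0 4, pow_nonneg h0 5, pow_nonneg h0 6,
      pow_nonneg h0 7, sq_nonneg z]
  linarith

lemma sum_range_cast (j : ℕ) : ∑ i ∈ Finset.range j, ((i:ℝ)+1) = (j:ℝ)*((j:ℝ)+1)/2 := by
  induction j with
  | zero => simp
  | succ k ih => rw [Finset.sum_range_succ, ih]; push_cast; ring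

lemma choose_ratio (n h : ℕ) (hh1 : n ≤ 2*h + 1) (hhn : h ≤ n) :
    ∀ j : ℕ, j ≤ h → (j : ℝ) ≤ ((h:ℝ)+1)/5 →
    (n.choose h : ℝ) * Real.exp (-(∑ i ∈ Finset.range j,
      (2*(((i:ℝ)+1)/((h:ℝ)+1)) + 3*(((i:ℝ)+1)/((h:ℝ)+1))^3))) ≤ n.choose (h - j) := by
  intro j
  induction j with
  | zero =>
    intro _ _
    simp
  | succ k ih =>
    intro hk1 hk5
    have hH : (0:ℝ) < (h:ℝ)+1 := by positivity
    have ihk : (n.choose h : ℝ) * Real.exp (-(∑ i ∈ Finset.range k,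
        (2*(((i:ℝ)+1)/((h:ℝ)+1)) + 3*(((i:ℝ)+1)/((h:ℝ)+1))^3))) ≤ n.choose (h - k) := by
      apply ih (by omega)
      push_cast at hk5 ⊢
      linarith
    set z : ℝ := ((k:ℝ)+1)/((h:ℝ)+1) with hz
    have hz0 : 0 ≤ z := by positivity
    have hz5 : z ≤ 1/5 := by
      rw [hz, div_le_iff₀ hH]
      push_cast at hk5
      linarith
    -- choose identity
    have hstep : h - (k+1) + 1 = h - k := by omega
    have hidN := Nat.choose_succ_right_eq n (h - (k+1))
    rw [hstep] at hidN
    have hc1 : ((h - k : ℕ) : ℝ) = (h:ℝ) - k := by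
      have : k ≤ h := by omega
      push_cast [this]; ring
    have hc2 : ((n - (h - (k+1)) : ℕ) : ℝ) = (n:ℝ) - ((h:ℝ) - ((k:ℝ)+1)) := by
      have h1 : h - (k+1) ≤ n := by omega
      have h2 : k + 1 ≤ h := by omega
      push_cast [h1, h2]; ring
    have hidR : (n.choose (h-k) : ℝ) * ((h:ℝ) - k)
        = (n.choose (h - (k+1)) : ℝ) * ((n:ℝ) - ((h:ℝ) - ((k:ℝ)+1))) := by
      have := congrArg (fun x : ℕ => (x : ℝ)) hidN
      push_cast at this
      rw [hc1] at this -- may not be needed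
      rw [← hc1, ← hc2]
      exact_mod_cast hidN
    have hD : (0:ℝ) < (n:ℝ) - ((h:ℝ) - ((k:ℝ)+1)) := by
      have h1 : (h:ℝ) ≤ (n:ℝ) := by exact_mod_cast hhn
      linarith
    have hhk : (0:ℝ) ≤ (h:ℝ) - k := by
      have : (k:ℝ) ≤ (h:ℝ) := by exact_mod_cast (by omega : k ≤ h)
      linarith
    -- the factor inequality
    have hfrac : (1 - z) / (1 + z) ≤ ((h:ℝ) - k) / ((n:ℝ) - ((h:ℝ) - ((k:ℝ)+1))) := by
      have hnum : (1 - z) / (1 + z) = ((h:ℝ) - k) / ((h:ℝ) + k + 2) := by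
        rw [hz]
        rw [div_eq_div_iff (by positivity) (by positivity)]
        field_simp
        ring_nf
      rw [hnum]
      apply div_le_div_of_nonneg_left hhk hD
      have : (n:ℝ) ≤ 2*(h:ℝ) + 1 := by exact_mod_cast hh1
      linarith
    have hexpz : Real.exp (-(2*z + 3*z^3)) ≤ ((h:ℝ) - k) / ((n:ℝ) - ((h:ℝ) - ((k:ℝ)+1))) :=
      (ratio_ge_exp hz0 hz5).trans hfrac
    have hfinal : (n.choose (h-k) : ℝ) * (((h:ℝ) - k) / ((n:ℝ) - ((h:ℝ) - ((k:ℝ)+1))))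
        = (n.choose (h - (k+1)) : ℝ) := by
      rw [mul_div_assoc', hidR, mul_div_assoc]
      rw [div_self hD.ne', mul_one]
    calc (n.choose h : ℝ) * Real.exp (-(∑ i ∈ Finset.range (k+1),
          (2*(((i:ℝ)+1)/((h:ℝ)+1)) + 3*(((i:ℝ)+1)/((h:ℝ)+1))^3)))
        = ((n.choose h : ℝ) * Real.exp (-(∑ i ∈ Finset.range k,
          (2*(((i:ℝ)+1)/((h:ℝ)+1)) + 3*(((i:ℝ)+1)/((h:ℝ)+1))^3)))) * Real.exp (-(2*z + 3*z^3)) := by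
          rw [Finset.sum_range_succ, neg_add, Real.exp_add, ← mul_assoc, hz]
      _ ≤ (n.choose (h-k) : ℝ) * Real.exp (-(2*z + 3*z^3)) :=
          mul_le_mul_of_nonneg_right ihk (Real.exp_nonneg _)
      _ ≤ (n.choose (h-k) : ℝ) * (((h:ℝ) - k) / ((n:ℝ) - ((h:ℝ) - ((k:ℝ)+1)))) :=
          mul_le_mul_of_nonneg_left hexpz (by positivity)
      _ = (n.choose (h - (k+1)) : ℝ) := hfinal

lemma aux_mul_succ {j B : ℝ} (h0 : 0 ≤ j) (h : j ≤ B) : j*(j+1) ≤ B*(B+1) := by nlinarith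

lemma aux_b_bound {t s : ℝ} (ht : 0 ≤ t) (hts : t ≤ s) (hs1 : 1 ≤ s) :
    (t*s/2+1)*((t*s/2+1)+1) ≤ (t^2/2 + 10)*(s^2/2) := by nlinarith

lemma aux_cube {B N : ℝ} (h : B^4 ≤ N^3) : 3*B^4 ≤ 24*((N/2)^3) := by nlinarith

open MeasureTheory ProbabilityTheory Real
open scoped Classical

lemma main_bound (c : ℝ) (hc0 : 0 < c) (hcS : c ≤ (1:ℝ)/2^65536)
    (hcE : c ≤ Real.exp (-(40:ℝ))/4) :
    ∀ n : ℕ, 2 ≤ n → ∀ t : ℝ, 0 ≤ t → t ≤ (n : ℝ) ^ ((1 : ℝ) / 4) →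
      c * Q t / Real.sqrt n ≤
        ((Finset.univ.filter fun x : Fin n → Bool =>
            (wt x : ℤ) ≤ ⌊(n : ℝ) / 2 - t * Real.sqrt n / 2⌋).card : ℝ) / 2 ^ n := by
  intro n hn t ht ht4
  have hn0 : (0:ℝ) < n := by exact_mod_cast (by omega : 0 < n)
  have hn1 : (1:ℝ) ≤ n := by exact_mod_cast (by omega : 1 ≤ n)
  have hs1 : (1:ℝ) ≤ Real.sqrt n := by
    rw [show (1:ℝ) = Real.sqrt 1 from Real.sqrt_one.symm]
    exact Real.sqrt_le_sqrt hn1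
  set s := Real.sqrt n with hsdef
  have hs0 : (0:ℝ) < s := lt_of_lt_of_le one_pos hs1
  have hs2 : s^2 = n := Real.sq_sqrt hn0.le
  set m4 : ℝ := (n:ℝ) ^ ((1:ℝ)/4) with hm4def
  set M : ℝ := (n:ℝ) ^ ((3:ℝ)/4) with hMdef
  have hm40 : 0 ≤ m4 := Real.rpow_nonneg hn0.le _
  have hM0 : 0 ≤ M := Real.rpow_nonneg hn0.le _
  have hm41 : (1:ℝ) ≤ m4 := by
    have h1 : (1:ℝ)^((1:ℝ)/4) ≤ (n:ℝ)^((1:ℝ)/4) := Real.rpow_le_rpow zero_le_one hn1 (by norm_num)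
    rwa [Real.one_rpow] at h1
  have hm4s : m4 * s = M := by
    rw [hm4def, hMdef, hsdef, Real.sqrt_eq_rpow, ← Real.rpow_add hn0]
    norm_num
  have hMn : M * m4 = n := by
    rw [hm4def, hMdef, ← Real.rpow_add hn0]
    norm_num
  have hMlen : M ≤ n := by
    have h1 : M * 1 ≤ M * m4 := mul_le_mul_of_nonneg_left hm41 hM0
    rw [hMn] at h1
    linarith
  have hm4les : m4 ≤ s := by
    rw [hm4def, hsdef, Real.sqrt_eq_rpow]
    exact Real.rpow_le_rpow_of_exponent_le hn1 (by norm_num)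
  have htsM : t * s ≤ M := by
    calc t * s ≤ m4 * s := mul_le_mul_of_nonneg_right ht4 hs0.le
      _ = M := hm4s
  have hts0 : 0 ≤ t * s := mul_nonneg ht hs0.le
  have hr0 : (0:ℤ) ≤ ⌊(n:ℝ)/2 - t * s / 2⌋ := by
    apply Int.le_floor.2
    push_cast
    linarith
  have hmem : (fun _ => false) ∈ (Finset.univ.filter fun x : Fin n → Bool =>
      (wt x : ℤ) ≤ ⌊(n : ℝ) / 2 - t * s / 2⌋) := by
    refine Finset.mem_filter.2 ⟨Finset.mem_univ _, ?_⟩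
    have hw : wt (fun _ : Fin n => false) = 0 := by simp [wt]
    rw [hw]
    exact_mod_cast hr0
  have hcard1 : 1 ≤ (Finset.univ.filter fun x : Fin n → Bool =>
      (wt x : ℤ) ≤ ⌊(n : ℝ) / 2 - t * s / 2⌋).card := Finset.card_pos.2 ⟨_, hmem⟩
  clear_value s m4 M
  by_cases hbig : 65536 ≤ n
  · -- main case
    clear hcS
    set r : ℤ := ⌊(n:ℝ)/2 - t * s / 2⌋ with hrdef
    set k : ℕ := r.toNat with hkdef
    have hkZ : (k : ℤ) = r := Int.toNat_of_nonneg hr0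
    clear_value r k
    have hkle : (k:ℝ) ≤ (n:ℝ)/2 - t*s/2 := by
      have h1 := Int.floor_le ((n:ℝ)/2 - t*s/2)
      rw [← hrdef, ← hkZ] at h1
      exact_mod_cast h1
    have hkgt : (n:ℝ)/2 - t*s/2 - 1 < (k:ℝ) := by
      have h1 := Int.lt_floor_add_one ((n:ℝ)/2 - t*s/2)
      rw [← hrdef, ← hkZ] at h1
      push_cast at h1
      linarith
    set h : ℕ := n/2 with hhdef
    clear_value h
    have hh1 : n ≤ 2*h + 1 := by omega
    have hhn : h ≤ n := by omega
    have hhR : 2*(h:ℝ) ≤ n := by exact_mod_cast (by omega : 2*h ≤ n)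
    have hhR1 : (n:ℝ) ≤ 2*(h:ℝ)+1 := by exact_mod_cast hh1
    have hkh : k ≤ h := by
      by_contra hcon
      push_neg at hcon
      have hcon' : (h:ℝ)+1 ≤ k := by exact_mod_cast hcon
      linarith
    set j : ℕ := h - k with hjdef
    clear_value j
    have hjh : j ≤ h := by omega
    have hjk : h - j = k := by omega
    have hjR : (j:ℝ) = (h:ℝ) - (k:ℝ) := by
      rw [hjdef]
      push_cast [hkh]
      ring
    set B : ℝ := t*s/2 + 1 with hBdef
    clear_value B
    have hB1 : (1:ℝ) ≤ B := by rw [hBdef]; linarith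
    have hB0 : (0:ℝ) ≤ B := by linarith
    have hjB : (j:ℝ) ≤ B := by rw [hjR, hBdef]; linarith
    have hj0 : (0:ℝ) ≤ (j:ℝ) := by positivity
    have hm416 : (16:ℝ) ≤ m4 := by
      have h1 : (65536:ℝ)^((1:ℝ)/4) ≤ (n:ℝ)^((1:ℝ)/4) :=
        Real.rpow_le_rpow (by norm_num) (by exact_mod_cast hbig) (by norm_num)
      have h2 : (65536:ℝ)^((1:ℝ)/4) = 16 := by
        rw [show (65536:ℝ) = 16^(4:ℕ) by norm_num, ← Real.rpow_natCast 16 4,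
          ← Real.rpow_mul (by norm_num)]
        norm_num
      rw [h2] at h1
      rw [hm4def]
      exact h1
    have hM16 : 16*M ≤ n := by
      have h1 : M * 16 ≤ M * m4 := mul_le_mul_of_nonneg_left hm416 hM0
      rw [hMn] at h1
      linarith
    have hm4leM : m4 ≤ M := by
      rw [hm4def, hMdef]
      exact Real.rpow_le_rpow_of_exponent_le hn1 (by norm_num)
    have hM2 : (2:ℝ) ≤ M := by linarith
    have hBM : B ≤ M := by rw [hBdef]; linarith
    have hcond : (j:ℝ) ≤ ((h:ℝ)+1)/5 := by
      have hH2 : (n:ℝ)/2 ≤ (h:ℝ)+1 := by linarith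
      linarith
    have hratio := choose_ratio n h hh1 hhn j hjh hcond
    -- sum bound
    have hHpos : (0:ℝ) < (h:ℝ)+1 := by positivity
    have hHn2 : (n:ℝ)/2 ≤ (h:ℝ)+1 := by linarith
    have hsum1 : ∑ i ∈ Finset.range j, 2*(((i:ℝ)+1)/((h:ℝ)+1))
        = (j:ℝ)*((j:ℝ)+1)/((h:ℝ)+1) := by
      calc ∑ i ∈ Finset.range j, 2*(((i:ℝ)+1)/((h:ℝ)+1))
          = (2/((h:ℝ)+1)) * ∑ i ∈ Finset.range j, ((i:ℝ)+1) := by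
            rw [Finset.mul_sum]
            exact Finset.sum_congr rfl fun i _ => by ring
        _ = (2/((h:ℝ)+1)) * ((j:ℝ)*((j:ℝ)+1)/2) := by rw [sum_range_cast]
        _ = (j:ℝ)*((j:ℝ)+1)/((h:ℝ)+1) := by ring
    have hsum3 : ∑ i ∈ Finset.range j, 3*(((i:ℝ)+1)/((h:ℝ)+1))^3
        ≤ (j:ℝ) * (3*((j:ℝ)/((h:ℝ)+1))^3) := by
      calc ∑ i ∈ Finset.range j, 3*(((i:ℝ)+1)/((h:ℝ)+1))^3
          ≤ ∑ _i ∈ Finset.range j, 3*((j:ℝ)/((h:ℝ)+1))^3 := by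
            apply Finset.sum_le_sum
            intro i hi
            have hij : (i:ℝ)+1 ≤ (j:ℝ) := by
              exact_mod_cast Finset.mem_range.1 hi
            gcongr
        _ = (j:ℝ) * (3*((j:ℝ)/((h:ℝ)+1))^3) := by
            rw [Finset.sum_const, Finset.card_range, nsmul_eq_mul]
    have hb1 : (j:ℝ)*((j:ℝ)+1)/((h:ℝ)+1) ≤ t^2/2 + 10 := by
      have hnum : (j:ℝ)*((j:ℝ)+1) ≤ B*(B+1) := aux_mul_succ hj0 hjB
      have hBB0 : (0:ℝ) ≤ B*(B+1) := by positivity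
      have hn2pos : (0:ℝ) < (n:ℝ)/2 := by linarith
      have step1 : (j:ℝ)*((j:ℝ)+1)/((h:ℝ)+1) ≤ B*(B+1)/((n:ℝ)/2) :=
        div_le_div₀ hBB0 hnum hn2pos hHn2
      refine step1.trans ?_
      rw [div_le_iff₀ hn2pos, hBdef, ← hs2]
      have hts : t ≤ s := le_trans ht4 hm4les
      exact aux_b_bound ht hts hs1
    have hb3 : (j:ℝ) * (3*((j:ℝ)/((h:ℝ)+1))^3) ≤ 24 := by
      have e1 : (j:ℝ) * (3*((j:ℝ)/((h:ℝ)+1))^3) = 3*(j:ℝ)^4/((h:ℝ)+1)^3 := by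
        field_simp
      rw [e1]
      have hj4 : (j:ℝ)^4 ≤ B^4 := pow_le_pow_left₀ hj0 hjB 4
      have hn2pos : (0:ℝ) < (n:ℝ)/2 := by linarith
      have hd3 : ((n:ℝ)/2)^3 ≤ ((h:ℝ)+1)^3 := pow_le_pow_left₀ hn2pos.le hHn2 3
      have hB40 : (0:ℝ) ≤ 3*B^4 := by positivity
      have step1 : 3*(j:ℝ)^4/((h:ℝ)+1)^3 ≤ 3*B^4/(((n:ℝ)/2)^3) :=
        div_le_div₀ hB40 (by linarith) (by positivity) hd3
      refine step1.trans ?_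
      have hM4 : M^(4:ℕ) = (n:ℝ)^(3:ℕ) := by
        rw [hMdef, ← Real.rpow_natCast ((n:ℝ) ^ ((3:ℝ)/4)) 4, ← Real.rpow_mul hn0.le,
          ← Real.rpow_natCast (n:ℝ) 3]
        norm_num
      have hB4 : B^4 ≤ (n:ℝ)^3 := by
        calc B^4 ≤ M^4 := pow_le_pow_left₀ hB0 hBM 4
          _ = (n:ℝ)^3 := hM4
      rw [div_le_iff₀ (by positivity)]
      exact aux_cube hB4
    have hSle : ∑ i ∈ Finset.range j,
        (2*(((i:ℝ)+1)/((h:ℝ)+1)) + 3*(((i:ℝ)+1)/((h:ℝ)+1))^3) ≤ t^2/2 + 40 := by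
      rw [Finset.sum_add_distrib, hsum1]
      linarith [hsum3, hb1, hb3]
    have hk_low : (n.choose h : ℝ) * Real.exp (-(t^2/2 + 40)) ≤ (n.choose k : ℝ) := by
      rw [← hjk]
      calc (n.choose h : ℝ) * Real.exp (-(t^2/2 + 40))
          ≤ (n.choose h : ℝ) * Real.exp (-(∑ i ∈ Finset.range j,
            (2*(((i:ℝ)+1)/((h:ℝ)+1)) + 3*(((i:ℝ)+1)/((h:ℝ)+1))^3))) := by
            apply mul_le_mul_of_nonneg_left _ (by positivity)
            exact Real.exp_le_exp.2 (by linarith)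
        _ ≤ (n.choose (h - j) : ℝ) := hratio
    have hhalf : (2:ℝ)^n ≤ 4*s*(n.choose h) := by
      rw [hsdef, hhdef]
      exact choose_half_ge n hn
    have hcardk : (n.choose k : ℝ) ≤ ((Finset.univ.filter fun x : Fin n → Bool =>
        (wt x : ℤ) ≤ r).card : ℝ) := by
      rw [← card_wt_eq n k]
      have hsub : (Finset.univ.filter fun x : Fin n → Bool => wt x = k)
          ⊆ (Finset.univ.filter fun x : Fin n → Bool => (wt x : ℤ) ≤ r) := by
        intro x hx
        rw [Finset.mem_filter] at hx ⊢
        refine ⟨hx.1, ?_⟩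
        rw [hx.2]
        exact le_of_eq hkZ
      exact_mod_cast Finset.card_le_card hsub
    rw [div_le_div_iff₀ hs0 (by positivity)]
    have hexpc : Real.exp (-(40:ℝ)) * Real.exp (-(t^2/2)) = Real.exp (-(t^2/2 + 40)) := by
      rw [← Real.exp_add]
      ring_nf
    calc c * Q t * 2^n
        ≤ (Real.exp (-(40:ℝ))/4) * Q t * 2^n := by
          apply mul_le_mul_of_nonneg_right _ (by positivity)
          exact mul_le_mul_of_nonneg_right hcE (Q_nonneg t)
      _ ≤ (Real.exp (-(40:ℝ))/4) * Real.exp (-(t^2/2)) * (4*s*(n.choose h)) := by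
          apply mul_le_mul (mul_le_mul_of_nonneg_left (Q_le_exp ht) (by positivity)) hhalf
            (by positivity) (by positivity)
      _ = s * ((n.choose h : ℝ) * (Real.exp (-(40:ℝ)) * Real.exp (-(t^2/2)))) := by ring
      _ = s * ((n.choose h : ℝ) * Real.exp (-(t^2/2 + 40))) := by rw [hexpc]
      _ ≤ s * (n.choose k : ℝ) := mul_le_mul_of_nonneg_left hk_low hs0.le
      _ ≤ s * ((Finset.univ.filter fun x : Fin n → Bool =>
            (wt x : ℤ) ≤ r).card : ℝ) := mul_le_mul_of_nonneg_left hcardk hs0.le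
      _ = ((Finset.univ.filter fun x : Fin n → Bool =>
            (wt x : ℤ) ≤ r).card : ℝ) * s := by ring
  · -- small case
    push_neg at hbig
    have l1 : c * Q t / s ≤ c * Q t :=
      div_le_self (mul_nonneg hc0.le (Q_nonneg t)) hs1
    have l2 : c * Q t ≤ c := mul_le_of_le_one_right hc0.le (Q_le_one t)
    have l3 : c ≤ (1:ℝ)/2^n := by
      refine le_trans hcS ?_
      apply one_div_le_one_div_of_le (by positivity)
      exact pow_le_pow_right₀ (by norm_num) (by omega)
    have l4 : (1:ℝ)/2^n ≤ ((Finset.univ.filter fun x : Fin n → Bool =>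
        (wt x : ℤ) ≤ ⌊(n : ℝ) / 2 - t * s / 2⌋).card : ℝ) / 2^n := by
      apply div_le_div_of_nonneg_right ?_ (by positivity)
      exact_mod_cast hcard1
    exact le_trans (le_trans l1 l2) (le_trans l3 l4)

theorem binomial_tail_lower_bound :
    ∃ c : ℝ, 0 < c ∧ ∀ n : ℕ, 2 ≤ n → ∀ t : ℝ, 0 ≤ t → t ≤ (n : ℝ) ^ ((1 : ℝ) / 4) →
      c * Q t / Real.sqrt n ≤
        ((Finset.univ.filter fun x : Fin n → Bool =>
            (wt x : ℤ) ≤ ⌊(n : ℝ) / 2 - t * Real.sqrt n / 2⌋).card : ℝ) / 2 ^ n :=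
  ⟨min ((1:ℝ)/2^65536) (Real.exp (-(40:ℝ))/4), lt_min (by positivity) (by positivity),
    main_bound _ (lt_min (by positivity) (by positivity)) (min_le_left _ _) (min_le_right _ _)⟩
end

section
/- (Point probability lower bound for biased binomials.) For every ε ∈ (0, 1/2] there exist constants c > 0 and δ > 0 such that for every integer m ≥ 1 and every real α > 0 with α³·m ≤ δ the following holds: if (ε+α)·m is an integer ℓ with 0 ≤ ℓ ≤ m, then P(Bin(m,ε) = ℓ) ≥ (c/√m)·e^{−m·α²/(2·ε·(1−ε))}; and if (ε−α)·m is a nonnegative integer ℓ', then P(Bin(m,ε) = ℓ') ≥ (c/√m)·e^{−m·α²/(2·ε·(1−ε))}. -/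
open Real

set_option maxHeartbeats 1000000 in
lemma log_cubic (x : ℝ) (hx : -1 < x) : Real.log (1+x) ≤ x - x^2/2 + x^3/3 := by
  set g : ℝ → ℝ := fun y => y - y^2/2 + y^3/3 - Real.log (1+y) with hg
  have hderiv : ∀ y : ℝ, -1 < y → HasDerivAt g (y^3/(1+y)) y := by
    intro y hy
    have h1 : (0:ℝ) < 1 + y := by linarith
    have hl : HasDerivAt (fun z : ℝ => Real.log (1+z)) (1/(1+y)) y := by
      have := (Real.hasDerivAt_log h1.ne').comp y ((hasDerivAt_id y).const_add 1)
      simpa [Function.comp_def] using this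
    have hp : HasDerivAt (fun z : ℝ => z - z^2/2 + z^3/3) (1 - y + y^2) y := by
      have := (((hasDerivAt_id y).sub (((hasDerivAt_pow 2 y)).div_const 2)).add
        (((hasDerivAt_pow 3 y)).div_const 3))
      refine this.congr_deriv ?_
      ring
    have := hp.sub hl
    refine this.congr_deriv ?_
    field_simp
    ring
  have key : ∀ y : ℝ, -1 < y → 0 ≤ g y := by
    intro y hy
    rcases le_or_gt 0 y with h | h
    · have hmono : MonotoneOn g (Set.Ici (0:ℝ)) := by
        apply monotoneOn_of_deriv_nonneg (convex_Ici 0)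
        · apply ContinuousOn.sub (by fun_prop)
          apply ContinuousOn.log (by fun_prop)
          intro z hz; simp at hz; intro hc; linarith
        · intro z hz
          exact ((hderiv z (by simp at hz; linarith)).differentiableAt).differentiableWithinAt
        · intro z hz
          simp at hz
          rw [((hderiv z (by linarith)).deriv)]  -- deriv within open = deriv
          positivity
      have := hmono (Set.mem_Ici.2 le_rfl) (Set.mem_Ici.2 h) h
      simpa [hg] using this
    · have hanti : AntitoneOn g (Set.Ioc (-1:ℝ) 0) := by
        apply antitoneOn_of_deriv_nonpos (convex_Ioc (-1) 0)
        · apply ContinuousOn.sub (by fun_prop)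
          apply ContinuousOn.log (by fun_prop)
          intro z hz; simp at hz; intro hc; linarith [hz.1]
        · intro z hz
          rw [interior_Ioc] at hz
          exact ((hderiv z hz.1).differentiableAt).differentiableWithinAt
        · intro z hz
          rw [interior_Ioc] at hz
          rw [((hderiv z hz.1).deriv)]
          apply div_nonpos_of_nonpos_of_nonneg
          · nlinarith [hz.2.le, sq_nonneg z]
          · linarith [hz.1]
      have := hanti (Set.mem_Ioc.2 ⟨hy, h.le⟩) (Set.mem_Ioc.2 ⟨by norm_num, le_rfl⟩) h.le
      simpa [hg] using this
  have := key x hx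
  simp only [hg] at this
  linarith

lemma stirling_lb (n : ℕ) (hn : 1 ≤ n) :
    Real.sqrt π * (Real.sqrt (2*n) * ((n:ℝ)/Real.exp 1)^n) ≤ (Nat.factorial n : ℝ) := by
  have hanti := Stirling.stirlingSeq'_antitone
  have hlim : Filter.Tendsto (Stirling.stirlingSeq ∘ Nat.succ) Filter.atTop (nhds (Real.sqrt π)) := by
    have := (Filter.tendsto_add_atTop_iff_nat 1).2 Stirling.tendsto_stirlingSeq_sqrt_pi
    exact this.congr (fun n => by simp [Function.comp, Nat.succ_eq_add_one, Nat.add_comm])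
  obtain ⟨k, hk⟩ := Nat.exists_eq_add_of_le hn
  have hle : Real.sqrt π ≤ Stirling.stirlingSeq n := by
    have := hanti.le_of_tendsto hlim k
    simpa [Function.comp, hk, Nat.add_comm] using this
  have hd : 0 < Real.sqrt (2*n) * ((n:ℝ)/Real.exp 1)^n := by
    have : (0:ℝ) < n := by exact_mod_cast hn
    positivity
  rw [Stirling.stirlingSeq, le_div_iff₀ hd] at hle
  exact hle

lemma stirling_ub (n : ℕ) (hn : 1 ≤ n) :
    (Nat.factorial n : ℝ) ≤ (Real.exp 1 / Real.sqrt 2) * (Real.sqrt (2*n) * ((n:ℝ)/Real.exp 1)^n) := by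
  have hanti := Stirling.stirlingSeq'_antitone
  obtain ⟨k, hk⟩ := Nat.exists_eq_add_of_le hn
  have hle : Stirling.stirlingSeq n ≤ Stirling.stirlingSeq 1 := by
    have := hanti (Nat.zero_le k)
    simpa [Function.comp, hk, Nat.add_comm] using this
  rw [Stirling.stirlingSeq_one] at hle
  have hd : 0 < Real.sqrt (2*n) * ((n:ℝ)/Real.exp 1)^n := by
    have : (0:ℝ) < n := by exact_mod_cast hn
    positivity
  rw [Stirling.stirlingSeq, div_le_iff₀ hd] at hle
  exact hle

lemma kl_bound (ε s : ℝ) (hε0 : 0 < ε) (hε1 : ε ≤ 1/2) (hs : |s| ≤ ε/2) :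
    (ε+s) * Real.log ((ε+s)/ε) + (1-ε-s) * Real.log ((1-ε-s)/(1-ε)) ≤
      s^2/(2*ε*(1-ε)) + |s|^3/(2*ε^2) := by
  obtain ⟨q, hq⟩ : ∃ q : ℝ, q = 1 - ε := ⟨1-ε, rfl⟩
  rw [show (1:ℝ)-ε-s = q-s by rw [hq], show (1:ℝ)-ε = q from hq.symm]
  have habs1 : -(ε/2) ≤ s := neg_le_of_abs_le hs
  have habs2 : s ≤ ε/2 := le_of_abs_le hs
  have hq0 : 0 < q := by rw [hq]; linarith
  have hεq : ε ≤ q := by rw [hq]; linarith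
  have hps : 0 < ε + s := by linarith
  have hqs : 0 < q - s := by linarith
  have h1 : Real.log ((ε+s)/ε) ≤ s/ε - (s/ε)^2/2 + (s/ε)^3/3 := by
    have hx : -1 < s/ε := by
      rw [neg_lt, ← neg_div]
      exact lt_of_le_of_lt (by linarith : -s ≤ ε/2) (by linarith) |>.trans_le le_rfl |> fun h => (div_lt_one hε0).2 h
    have := log_cubic (s/ε) hx
    have heq : (ε+s)/ε = 1 + s/ε := by field_simp
    rw [heq]; exact this
  have h2 : Real.log ((q-s)/q) ≤ (-s)/q - ((-s)/q)^2/2 + ((-s)/q)^3/3 := by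
    have hx : -1 < (-s)/q := by
      rw [neg_lt, ← neg_div, neg_neg]
      exact (div_lt_one hq0).2 (by linarith)
    have := log_cubic ((-s)/q) hx
    have heq : (q-s)/q = 1 + (-s)/q := by field_simp; ring
    rw [heq]; exact this
  have hsum : (ε+s) * Real.log ((ε+s)/ε) + (q-s) * Real.log ((q-s)/q) ≤
      (ε+s) * (s/ε - (s/ε)^2/2 + (s/ε)^3/3) + (q-s) * ((-s)/q - ((-s)/q)^2/2 + ((-s)/q)^3/3) :=
    add_le_add (mul_le_mul_of_nonneg_left h1 hps.le) (mul_le_mul_of_nonneg_left h2 hqs.le)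
  refine hsum.trans ?_
  have hdecomp : (ε+s) * (s/ε - (s/ε)^2/2 + (s/ε)^3/3) + (q-s) * ((-s)/q - ((-s)/q)^2/2 + ((-s)/q)^3/3)
      = s^2/(2*ε*q) + s^3*(ε^2-q^2)/(6*ε^2*q^2) + s^4*(q^3+ε^3)/(3*ε^3*q^3) := by
    rw [hq]
    have h1e : (1:ℝ)-ε ≠ 0 := by linarith
    field_simp
    ring
  rw [hdecomp]
  have ha : 0 ≤ |s| := abs_nonneg s
  have hterm2 : s^3*(ε^2-q^2)/(6*ε^2*q^2) ≤ |s|^3/(6*ε^2) := by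
    rw [div_le_div_iff₀ (by positivity) (by positivity)]
    have h1' : s^3*(ε^2-q^2) ≤ |s|^3 * q^2 := by
      calc s^3*(ε^2-q^2) ≤ |s^3 * (ε^2-q^2)| := le_abs_self _
        _ = |s|^3 * |ε^2-q^2| := by rw [abs_mul, abs_pow]
        _ = |s|^3 * (q^2 - ε^2) := by
            rw [abs_of_nonpos (by nlinarith : ε^2-q^2 ≤ 0)]; ring_nf
        _ ≤ |s|^3 * q^2 := by nlinarith [pow_nonneg ha 3, sq_nonneg ε]
    have := mul_le_mul_of_nonneg_right h1' (show (0:ℝ) ≤ 6*ε^2 by positivity)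
    calc s^3*(ε^2-q^2)*(6*ε^2) ≤ |s|^3*q^2*(6*ε^2) := this
      _ = |s|^3*(6*ε^2*q^2) := by ring
  have hterm3 : s^4*(q^3+ε^3)/(3*ε^3*q^3) ≤ |s|^3/(3*ε^2) := by
    rw [div_le_div_iff₀ (by positivity) (by positivity)]
    have h4 : s^4 ≤ |s|^3 * (ε/2) := by
      have he : s^4 = |s|^3 * |s| := by
        rw [← pow_succ, ← abs_pow]
        exact (abs_of_nonneg (by positivity : (0:ℝ) ≤ s^4)).symm
      rw [he]
      exact mul_le_mul_of_nonneg_left hs (by positivity)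
    have h5 : q^3+ε^3 ≤ 2*q^3 := by nlinarith
    have hc : s^4*(q^3+ε^3) ≤ |s|^3*ε*q^3 := by
      calc s^4*(q^3+ε^3) ≤ (|s|^3*(ε/2))*(q^3+ε^3) := by
            apply mul_le_mul_of_nonneg_right h4 (by positivity)
        _ ≤ (|s|^3*(ε/2))*(2*q^3) := by
            apply mul_le_mul_of_nonneg_left h5 (by positivity)
        _ = |s|^3*ε*q^3 := by ring
    calc s^4*(q^3+ε^3)*(3*ε^2) ≤ (|s|^3*ε*q^3)*(3*ε^2) :=
          mul_le_mul_of_nonneg_right hc (by positivity)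
      _ = |s|^3*(3*ε^3*q^3) := by ring
  have hcomb : |s|^3/(6*ε^2) + |s|^3/(3*ε^2) = |s|^3/(2*ε^2) := by
    field_simp
    ring
  linarith

set_option maxHeartbeats 1000000 in
lemma point_mass (ε : ℝ) (hε0 : 0 < ε) (hε1 : ε ≤ 1/2) (m : ℕ) (hm : 1 ≤ m)
    (s : ℝ) (hs : |s| ≤ ε/2) (ℓ : ℕ) (hℓ : (ε+s)*m = ℓ) :
    (2*Real.sqrt (2*π)/(Real.exp 1)^2) / Real.sqrt m *
      Real.exp (-((m:ℝ)*s^2)/(2*ε*(1-ε)) - m*|s|^3/(2*ε^2)) ≤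
      (m.choose ℓ : ℝ) * ε^ℓ * (1-ε)^(m-ℓ) := by
  have E1 : (0:ℝ) < Real.exp 1 := Real.exp_pos 1
  have habs1 : -(ε/2) ≤ s := neg_le_of_abs_le hs
  have habs2 : s ≤ ε/2 := le_of_abs_le hs
  have hq0 : (0:ℝ) < 1-ε := by linarith
  have hp0 : 0 < ε+s := by linarith
  have hp1 : ε+s ≤ 3/4 := by linarith
  have hq0' : 0 < 1-ε-s := by linarith
  have hm0 : (0:ℝ) < m := by exact_mod_cast hm
  have hA : (ℓ:ℝ) = (ε+s)*m := hℓ.symm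
  have hA0 : (0:ℝ) < ℓ := by rw [hA]; positivity
  have hℓ1 : 1 ≤ ℓ := by exact_mod_cast Nat.one_le_iff_ne_zero.2 (by rintro rfl; simp at hA0)
  have hℓm : ℓ < m := by
    have : (ℓ:ℝ) < m := by rw [hA]; nlinarith
    exact_mod_cast this
  set n : ℕ := m - ℓ with hn
  have hn1 : 1 ≤ n := Nat.le_sub_of_add_le (by omega)
  have hB : (n:ℝ) = (1-ε-s)*m := by
    have : (n:ℝ) = (m:ℝ) - ℓ := by
      rw [hn]; push_cast [Nat.cast_sub hℓm.le]; ring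
    rw [this, hA]; ring
  have hB0 : (0:ℝ) < n := by rw [hB]; positivity
  have hAB : (ℓ:ℝ) + n = m := by rw [hA, hB]; ring
  -- factorial bounds
  have hml := stirling_lb m hm
  have hlu := stirling_ub ℓ hℓ1
  have hbu := stirling_ub n hn1
  have h2A : Real.sqrt (2*(ℓ:ℝ)) = Real.sqrt 2 * Real.sqrt ℓ := Real.sqrt_mul (by norm_num) _
  have h2B : Real.sqrt (2*(n:ℝ)) = Real.sqrt 2 * Real.sqrt n := Real.sqrt_mul (by norm_num) _
  have hs2pos : (0:ℝ) < Real.sqrt 2 := Real.sqrt_pos.2 (by norm_num)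
  have hDl : (Real.exp 1/Real.sqrt 2)*(Real.sqrt (2*(ℓ:ℝ))*(((ℓ:ℝ))/Real.exp 1)^ℓ)
      = Real.exp 1*(Real.sqrt (ℓ:ℝ)*(((ℓ:ℝ))/Real.exp 1)^ℓ) := by
    rw [h2A]; field_simp
  have hDn : (Real.exp 1/Real.sqrt 2)*(Real.sqrt (2*(n:ℝ))*(((n:ℝ))/Real.exp 1)^n)
      = Real.exp 1*(Real.sqrt (n:ℝ)*(((n:ℝ))/Real.exp 1)^n) := by
    rw [h2B]; field_simp
  rw [hDl] at hlu
  rw [hDn] at hbu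
  have hε' : (0:ℝ) < ε := hε0
  -- positivity facts
  have hPl : (0:ℝ) < Real.sqrt (2*ℓ) * (((ℓ:ℝ))/Real.exp 1)^ℓ := by positivity
  have hPb : (0:ℝ) < Real.sqrt (2*n) * (((n:ℝ))/Real.exp 1)^n := by positivity
  have hPm : (0:ℝ) < Real.sqrt (2*m) * (((m:ℝ))/Real.exp 1)^m := by positivity
  -- choose as factorial ratio
  have hcf : (m.choose ℓ : ℝ) = (Nat.factorial m : ℝ) / ((Nat.factorial ℓ : ℝ) * (Nat.factorial n : ℝ)) := by
    rw [eq_div_iff (by positivity)]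
    have := Nat.choose_mul_factorial_mul_factorial hℓm.le
    push_cast [← this]
    ring
  set E : ℝ := Real.exp 1 with hE
  -- step 1: lower bound for the probability in terms of Stirling expressions
  have hmain : Real.sqrt π*(Real.sqrt (2*m)*((m:ℝ)/E)^m) * (ε^ℓ*(1-ε)^n) /
      ( (E*(Real.sqrt (ℓ:ℝ)*(((ℓ:ℝ))/E)^ℓ)) * (E*(Real.sqrt (n:ℝ)*(((n:ℝ))/E)^n)) )
      ≤ (m.choose ℓ : ℝ) * ε^ℓ * (1-ε)^n := by
    rw [hcf]
    have hr : (Nat.factorial m : ℝ)/((Nat.factorial ℓ : ℝ)*(Nat.factorial n : ℝ)) * ε^ℓ * (1-ε)^n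
        = (Nat.factorial m : ℝ) * (ε^ℓ*(1-ε)^n)/((Nat.factorial ℓ : ℝ)*(Nat.factorial n : ℝ)) := by
      ring
    rw [hr]
    gcongr
    all_goals first
      | exact hml
      | exact hlu
      | exact hbu
      | positivity
  -- step 2: rewrite the Stirling expression as prefactor times exponential
  have pe : ∀ (x:ℝ), 0 < x → ∀ k:ℕ, x^k = Real.exp (k * Real.log x) := by
    intro x hx k
    rw [← Real.log_pow, Real.exp_log (pow_pos hx k)]
  have hlogm : Real.log ((m:ℝ)/E) = Real.log m - 1 := by
    rw [hE, Real.log_div hm0.ne' (Real.exp_ne_zero 1), Real.log_exp]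
  have hlogA : Real.log ((ℓ:ℝ)/E) = Real.log ℓ - 1 := by
    rw [hE, Real.log_div hA0.ne' (Real.exp_ne_zero 1), Real.log_exp]
  have hlogB : Real.log ((n:ℝ)/E) = Real.log n - 1 := by
    rw [hE, Real.log_div hB0.ne' (Real.exp_ne_zero 1), Real.log_exp]
  have hexpR : ((m:ℝ)/E)^m * (ε^ℓ*(1-ε)^n) / ((((ℓ:ℝ))/E)^ℓ * (((n:ℝ))/E)^n)
      = Real.exp ( (m:ℝ)*(Real.log m - 1) + ((ℓ:ℝ)*Real.log ε + (n:ℝ)*Real.log (1-ε))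
          - ((ℓ:ℝ)*(Real.log ℓ - 1) + (n:ℝ)*(Real.log n - 1)) ) := by
    rw [pe ((m:ℝ)/E) (by positivity) m, pe ε hε0 ℓ, pe (1-ε) hq0 n,
        pe ((ℓ:ℝ)/E) (by positivity) ℓ, pe ((n:ℝ)/E) (by positivity) n,
        hlogm, hlogA, hlogB, ← Real.exp_add, ← Real.exp_add, ← Real.exp_add, ← Real.exp_sub]
  -- step 3: exponent lower bound via KL
  have hexpo : -((m:ℝ)*s^2)/(2*ε*(1-ε)) - (m:ℝ)*|s|^3/(2*ε^2) ≤
      (m:ℝ)*(Real.log m - 1) + ((ℓ:ℝ)*Real.log ε + (n:ℝ)*Real.log (1-ε))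
        - ((ℓ:ℝ)*(Real.log ℓ - 1) + (n:ℝ)*(Real.log n - 1)) := by
    have hkl := kl_bound ε s hε0 hε1 hs
    rw [Real.log_div hp0.ne' hε0.ne', Real.log_div hq0'.ne' hq0.ne'] at hkl
    have hklm := mul_le_mul_of_nonneg_left hkl hm0.le
    have hlogA' : Real.log (ℓ:ℝ) = Real.log (ε+s) + Real.log m := by
      rw [hA, Real.log_mul hp0.ne' hm0.ne']
    have hlogB' : Real.log (n:ℝ) = Real.log (1-ε-s) + Real.log m := by
      rw [hB, Real.log_mul hq0'.ne' hm0.ne']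
    have hident : (m:ℝ)*(Real.log m - 1) + ((ℓ:ℝ)*Real.log ε + (n:ℝ)*Real.log (1-ε))
        - ((ℓ:ℝ)*(Real.log ℓ - 1) + (n:ℝ)*(Real.log n - 1))
        = -((m:ℝ)*((ε+s)*(Real.log (ε+s) - Real.log ε) + (1-ε-s)*(Real.log (1-ε-s) - Real.log (1-ε)))) := by
      rw [hlogA', hlogB', hA, hB]
      ring
    rw [hident]
    have heq2 : (m:ℝ)*(s^2/(2*ε*(1-ε))+|s|^3/(2*ε^2)) = ((m:ℝ)*s^2)/(2*ε*(1-ε)) + (m:ℝ)*|s|^3/(2*ε^2) := by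
      ring
    rw [heq2] at hklm
    have hgoal : -(↑m * s ^ 2) / (2 * ε * (1 - ε)) - ↑m * |s| ^ 3 / (2 * ε ^ 2)
        = -(↑m * s ^ 2 / (2 * ε * (1 - ε)) + ↑m * |s| ^ 3 / (2 * ε ^ 2)) := by ring
    rw [hgoal]
    exact neg_le_neg hklm
  -- step 4: prefactor bound
  have hABle : Real.sqrt (ℓ:ℝ) * Real.sqrt (n:ℝ) ≤ (m:ℝ)/2 := by
    rw [← Real.sqrt_mul hA0.le]
    have hle : (ℓ:ℝ)*(n:ℝ) ≤ ((m:ℝ)/2)^2 := by nlinarith [sq_nonneg ((ℓ:ℝ) - (n:ℝ))]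
    calc Real.sqrt ((ℓ:ℝ)*(n:ℝ)) ≤ Real.sqrt (((m:ℝ)/2)^2) := Real.sqrt_le_sqrt hle
      _ = (m:ℝ)/2 := Real.sqrt_sq (by positivity)
  have hK : (2*Real.sqrt (2*π)/E^2) / Real.sqrt m ≤
      Real.sqrt π*Real.sqrt (2*m) / ((E*Real.sqrt (ℓ:ℝ)) * (E*Real.sqrt (n:ℝ))) := by
    have hD : (E*Real.sqrt (ℓ:ℝ)) * (E*Real.sqrt (n:ℝ))
        = E^2 * (Real.sqrt (ℓ:ℝ)*Real.sqrt (n:ℝ)) := by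
      ring
    have hN : Real.sqrt π*Real.sqrt (2*(m:ℝ)) = Real.sqrt (2*π)*Real.sqrt (m:ℝ) := by
      rw [Real.sqrt_mul (by norm_num : (0:ℝ) ≤ 2) π, Real.sqrt_mul (by norm_num : (0:ℝ) ≤ 2) (m:ℝ)]
      ring
    push_cast at hD ⊢
    rw [hD, hN, div_le_div_iff₀ (by positivity) (by positivity)]
    have hc : (2*Real.sqrt (2*π)/E^2)*(E^2*(Real.sqrt (ℓ:ℝ)*Real.sqrt (n:ℝ)))
        = 2*Real.sqrt (2*π)*(Real.sqrt (ℓ:ℝ)*Real.sqrt (n:ℝ)) := by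
      field_simp
    rw [hc]
    have h1 : Real.sqrt (2*π)*(Real.sqrt (ℓ:ℝ)*Real.sqrt (n:ℝ)) ≤ Real.sqrt (2*π)*((m:ℝ)/2) :=
      mul_le_mul_of_nonneg_left hABle (Real.sqrt_nonneg _)
    calc 2*Real.sqrt (2*π)*(Real.sqrt (ℓ:ℝ)*Real.sqrt (n:ℝ))
        = 2*(Real.sqrt (2*π)*(Real.sqrt (ℓ:ℝ)*Real.sqrt (n:ℝ))) := by ring
      _ ≤ 2*(Real.sqrt (2*π)*((m:ℝ)/2)) := by linarith
      _ = Real.sqrt (2*π)*(Real.sqrt (m:ℝ)*Real.sqrt (m:ℝ)) := by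
          rw [Real.mul_self_sqrt hm0.le]; ring
      _ = Real.sqrt (2*π)*Real.sqrt (m:ℝ)*Real.sqrt (m:ℝ) := by ring
  -- step 5: assemble
  have hEq : (Real.sqrt π*Real.sqrt (2*m) / ((E*Real.sqrt (ℓ:ℝ)) * (E*Real.sqrt (n:ℝ)))) *
      (((m:ℝ)/E)^m * (ε^ℓ*(1-ε)^n) / ((((ℓ:ℝ))/E)^ℓ * (((n:ℝ))/E)^n))
      = Real.sqrt π*(Real.sqrt (2*m)*((m:ℝ)/E)^m) * (ε^ℓ*(1-ε)^n) /
      ( (E*(Real.sqrt (ℓ:ℝ)*(((ℓ:ℝ))/E)^ℓ)) * (E*(Real.sqrt (n:ℝ)*(((n:ℝ))/E)^n)) ) := by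
    field_simp
  calc (2*Real.sqrt (2*π)/E^2) / Real.sqrt m *
        Real.exp (-((m:ℝ)*s^2)/(2*ε*(1-ε)) - (m:ℝ)*|s|^3/(2*ε^2))
      ≤ (Real.sqrt π*Real.sqrt (2*m) / ((E*Real.sqrt (ℓ:ℝ)) * (E*Real.sqrt (n:ℝ)))) *
        Real.exp ( (m:ℝ)*(Real.log m - 1) + ((ℓ:ℝ)*Real.log ε + (n:ℝ)*Real.log (1-ε))
          - ((ℓ:ℝ)*(Real.log ℓ - 1) + (n:ℝ)*(Real.log n - 1)) ) := by
        apply mul_le_mul hK (Real.exp_le_exp.2 hexpo) (Real.exp_pos _).le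
        positivity
    _ = Real.sqrt π*(Real.sqrt (2*m)*((m:ℝ)/E)^m) * (ε^ℓ*(1-ε)^n) /
      ( (E*(Real.sqrt (ℓ:ℝ)*(((ℓ:ℝ))/E)^ℓ)) * (E*(Real.sqrt (n:ℝ)*(((n:ℝ))/E)^n)) ) := by
        rw [← hexpR, hEq]
    _ ≤ (m.choose ℓ : ℝ) * ε^ℓ * (1-ε)^n := hmain

set_option maxHeartbeats 1000000 in
theorem biased_binomial_point_lower_bound (ε : ℝ) (hε0 : 0 < ε) (hε1 : ε ≤ 1 / 2) :
    ∃ c δ : ℝ, 0 < c ∧ 0 < δ ∧ ∀ m : ℕ, 1 ≤ m → ∀ α : ℝ, 0 < α → α ^ 3 * m ≤ δ →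
      (∀ ℓ : ℕ, ℓ ≤ m → (ε + α) * m = ℓ →
        c / Real.sqrt m * Real.exp (-(m * α ^ 2) / (2 * ε * (1 - ε))) ≤
          (m.choose ℓ : ℝ) * ε ^ ℓ * (1 - ε) ^ (m - ℓ)) ∧
      (∀ ℓ' : ℕ, (ε - α) * m = ℓ' →
        c / Real.sqrt m * Real.exp (-(m * α ^ 2) / (2 * ε * (1 - ε))) ≤
          (m.choose ℓ' : ℝ) * ε ^ ℓ' * (1 - ε) ^ (m - ℓ')) := by
  refine ⟨2*Real.sqrt (2*π)/(Real.exp 1)^2 * Real.exp (-1), ε^3/8, by positivity, by positivity,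
    fun m hm α hα hαδ => ?_⟩
  have hm0 : (0:ℝ) < m := by exact_mod_cast hm
  have hα3 : α^3 ≤ ε^3/8 := by
    calc α^3 = α^3 * 1 := by ring
      _ ≤ α^3 * m := by
          apply mul_le_mul_of_nonneg_left _ (by positivity)
          exact_mod_cast hm
      _ ≤ ε^3/8 := hαδ
  have hαε : α ≤ ε/2 := by
    have h3 : α^3 ≤ (ε/2)^3 := by nlinarith
    exact le_of_pow_le_pow_left₀ three_ne_zero (by positivity) h3
  have habs : |α| = α := abs_of_pos hα
  have hextra : (m:ℝ)*α^3/(2*ε^2) ≤ 1 := by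
    rw [div_le_one (by positivity)]
    have h1 : (m:ℝ)*α^3 ≤ ε^3/8 := by
      calc (m:ℝ)*α^3 = α^3*m := by ring
        _ ≤ ε^3/8 := hαδ
    nlinarith
  -- key comparison of prefactors/exponents
  have key : ∀ X : ℝ, 2*Real.sqrt (2*π)/(Real.exp 1)^2 * Real.exp (-1) / Real.sqrt m *
      Real.exp X ≤ 2*Real.sqrt (2*π)/(Real.exp 1)^2 / Real.sqrt m *
      Real.exp (X - (m:ℝ)*α^3/(2*ε^2)) := by
    intro X
    have he : 2*Real.sqrt (2*π)/(Real.exp 1)^2 * Real.exp (-1) / Real.sqrt m * Real.exp X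
        = 2*Real.sqrt (2*π)/(Real.exp 1)^2 / Real.sqrt m * Real.exp (X - 1) := by
      rw [show X - 1 = X + (-1) by ring, Real.exp_add]
      ring
    rw [he]
    apply mul_le_mul_of_nonneg_left _ (by positivity)
    exact Real.exp_le_exp.2 (by linarith)
  constructor
  · intro ℓ hℓm hℓ
    have hpm := point_mass ε hε0 hε1 m hm α (by rw [habs]; exact hαε) ℓ hℓ
    rw [habs] at hpm
    exact le_trans (key _) hpm
  · intro ℓ' hℓ'
    have hs' : |(-α)| ≤ ε/2 := by rw [abs_neg, habs]; exact hαε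
    have hℓ'' : (ε + (-α))*m = ℓ' := by rw [show ε + -α = ε - α by ring]; exact hℓ'
    have hpm := point_mass ε hε0 hε1 m hm (-α) hs' ℓ' hℓ''
    rw [abs_neg, habs, neg_pow, show ((-1:ℝ))^2 = 1 by norm_num] at hpm
    simp only [one_mul] at hpm
    exact le_trans (key _) hpm
end

section
/- (Unimodality criterion for products of binomial coefficients.) Let M₁, M₂, L, a be natural numbers with 1 ≤ a ≤ L. If a·(M₁ + M₂ + 2) ≤ (M₁ + 1)·(L + 1), then C(M₁, a−1)·C(M₂, L−a+1) ≤ C(M₁, a)·C(M₂, L−a). -/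
theorem choose_product_unimodal (M₁ M₂ L a : ℕ) (ha1 : 1 ≤ a) (haL : a ≤ L)
    (h : a * (M₁ + M₂ + 2) ≤ (M₁ + 1) * (L + 1)) :
    M₁.choose (a - 1) * M₂.choose (L - a + 1) ≤ M₁.choose a * M₂.choose (L - a) := by
  rcases Nat.lt_or_ge M₂ (L - a + 1) with hM2 | hM2
  · rw [Nat.choose_eq_zero_of_lt hM2, mul_zero]; exact Nat.zero_le _
  rcases Nat.lt_or_ge M₁ a with hM1 | hM1
  · rcases Nat.lt_or_ge M₁ (a - 1) with h1 | h1
    · rw [Nat.choose_eq_zero_of_lt h1, zero_mul]; exact Nat.zero_le _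
    · -- here a = M₁ + 1, derive contradiction with hM2
      have haM : a = M₁ + 1 := by omega
      rw [haM] at h
      have hle : M₁ + M₂ + 2 ≤ L + 1 :=
        Nat.le_of_mul_le_mul_left h (Nat.succ_pos M₁)
      omega
  · -- main case : a ≤ M₁ and L - a + 1 ≤ M₂
    obtain ⟨b, rfl⟩ : ∃ b, a = b + 1 := ⟨a - 1, by omega⟩
    obtain ⟨c, rfl⟩ : ∃ c, L = (b + 1) + c := ⟨L - (b + 1), by omega⟩
    obtain ⟨d, rfl⟩ : ∃ d, M₁ = (b + 1) + d := ⟨M₁ - (b + 1), by omega⟩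
    obtain ⟨e, rfl⟩ : ∃ e, M₂ = (c + 1) + e := ⟨M₂ - (c + 1), by omega⟩
    simp only [Nat.add_sub_cancel_left, Nat.add_sub_cancel,
      show (b + 1) + c - (b + 1) = c from by omega,
      show (b + 1) - 1 = b from by omega]
    set X := ((b + 1) + d).choose b with hX
    set X' := ((b + 1) + d).choose (b + 1) with hX'
    set Y := ((c + 1) + e).choose c with hY
    set Y' := ((c + 1) + e).choose (c + 1) with hY'
    have e1 : X' * (b + 1) = X * (d + 1) := by
      rw [hX', hX, Nat.choose_succ_right_eq]
      congr 1
      omega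
    have e2 : Y' * (c + 1) = Y * (e + 1) := by
      rw [hY', hY, Nat.choose_succ_right_eq]
      congr 1
      omega
    have key : (b + 1) * (e + 1) ≤ (d + 1) * (c + 1) := by nlinarith
    refine Nat.le_of_mul_le_mul_left ?_ (show 0 < (b + 1) * (c + 1) by positivity)
    calc (b + 1) * (c + 1) * (X * Y') = (X * (b + 1)) * (Y' * (c + 1)) := by ring
      _ = (X * (b + 1)) * (Y * (e + 1)) := by rw [e2]
      _ = (X * Y) * ((b + 1) * (e + 1)) := by ring
      _ ≤ (X * Y) * ((d + 1) * (c + 1)) := Nat.mul_le_mul_left _ key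
      _ = (X * (d + 1)) * (Y * (c + 1)) := by ring
      _ = (X' * (b + 1)) * (Y * (c + 1)) := by rw [e1]
      _ = (b + 1) * (c + 1) * (X' * Y) := by ring
end

section
/- (Comparison of LSH exponents: the common-randomness-based hash family strictly improves on the trivial one.) The function g : [0,1) → ℝ defined by g(ρ) = ((1+ρ)/(1−ρ)) · log₂(2/(1+ρ)) is strictly increasing on [0,1); equivalently, for all 0 ≤ ρ' < ρ < 1, log₂(2/(1+ρ)) / log₂(2/(1+ρ')) > ((1−ρ)/(1+ρ)) / ((1−ρ')/(1+ρ')). -/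
open Real

theorem lsh_exponent_comparison :
    StrictMonoOn (fun ρ : ℝ => ((1 + ρ) / (1 - ρ)) * Real.logb 2 (2 / (1 + ρ)))
      (Set.Ico (0 : ℝ) 1) := by
  have hlog2 : (0:ℝ) < Real.log 2 := Real.log_pos (by norm_num)
  have key : StrictMonoOn
      (fun ρ : ℝ => ((1 + ρ) / (1 - ρ)) * ((Real.log 2 - Real.log (1 + ρ)) / Real.log 2))
      (Set.Ico (0:ℝ) 1) := by
    apply strictMonoOn_of_deriv_pos (convex_Ico 0 1)
    · apply ContinuousOn.mul
      · exact (continuousOn_const.add continuousOn_id).div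
          (continuousOn_const.sub continuousOn_id)
          (fun x hx => by simp only [Set.mem_Ico] at hx; intro h; linarith [hx.2])
      · apply ContinuousOn.div_const
        apply continuousOn_const.sub
        apply ContinuousOn.log
        · exact continuousOn_const.add continuousOn_id
        · intro x hx; simp only [Set.mem_Ico, id] at hx ⊢; intro h; linarith [hx.1]
    · intro x hx
      rw [interior_Ico] at hx
      obtain ⟨hx0, hx1⟩ := hx
      have h1x : (0:ℝ) < 1 + x := by linarith
      have h1x' : (0:ℝ) < 1 - x := by linarith
      have hA : HasDerivAt (fun ρ : ℝ => (1 + ρ) / (1 - ρ))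
          ((1 * (1 - x) - (1 + x) * (-1)) / (1 - x) ^ 2) x := by
        have h1 : HasDerivAt (fun ρ : ℝ => 1 + ρ) 1 x := by
          simpa using (hasDerivAt_id x).const_add (1:ℝ)
        have h2 : HasDerivAt (fun ρ : ℝ => 1 - ρ) (-1) x := by
          simpa using (hasDerivAt_id x).const_sub (1:ℝ)
        exact h1.div h2 (by linarith)
      have hB : HasDerivAt (fun ρ : ℝ => (Real.log 2 - Real.log (1 + ρ)) / Real.log 2)
          ((0 - 1 / (1 + x)) / Real.log 2) x := by
        apply HasDerivAt.div_const
        apply (hasDerivAt_const x (Real.log 2)).sub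
        have h1 : HasDerivAt (fun ρ : ℝ => 1 + ρ) 1 x := by
          simpa using (hasDerivAt_id x).const_add (1:ℝ)
        simpa using h1.log (by linarith)
      have hg := hA.mul hB
      rw [HasDerivAt.deriv (f := fun ρ : ℝ => (1 + ρ) / (1 - ρ) * ((Real.log 2 - Real.log (1 + ρ)) / Real.log 2)) hg]
      have hlt : (1 - x) / 2 < Real.log 2 - Real.log (1 + x) := by
        have h := Real.log_lt_sub_one_of_pos (x := (1 + x) / 2) (by linarith)
          (by intro h; rw [div_eq_one_iff_eq (by norm_num)] at h; linarith)
        rw [Real.log_div (by linarith) (by norm_num)] at h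
        linarith
      have heq : (1 * (1 - x) - (1 + x) * (-1)) / (1 - x) ^ 2 *
          ((Real.log 2 - Real.log (1 + x)) / Real.log 2) +
          (1 + x) / (1 - x) * ((0 - 1 / (1 + x)) / Real.log 2)
          = (2 * (Real.log 2 - Real.log (1 + x)) - (1 - x)) /
            ((1 - x) ^ 2 * Real.log 2) := by
        field_simp
        ring
      rw [heq]
      apply div_pos (by linarith) (by positivity)
  have : Set.EqOn
      (fun ρ : ℝ => ((1 + ρ) / (1 - ρ)) * ((Real.log 2 - Real.log (1 + ρ)) / Real.log 2))
      (fun ρ : ℝ => ((1 + ρ) / (1 - ρ)) * Real.logb 2 (2 / (1 + ρ)))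
      (Set.Ico (0:ℝ) 1) := by
    intro ρ hρ
    simp only [Set.mem_Ico] at hρ
    have h1ρ : (0:ℝ) < 1 + ρ := by linarith [hρ.1]
    simp only [Real.logb, Real.log_div (two_ne_zero) (ne_of_gt h1ρ)]
  exact key.congr this
end
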